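/- arXiv:1003.2697 — 6 statements merged into one kernel-verified Lean document; each statement's English description precedes it below -/
import Mathlib

section
/- For every finite simple undirected graph G, the maximum size ν₂(G) of a 2-matching in G equals the minimum over all subsets U ⊆ VG of the quantity |VG| + |U| − iso(G − U), where iso(H) is the number of isolated nodes of H. -/
open scoped Classical

namespace TF

noncomputable section

variable {V : Type*} {W : Type*}

/-- `x` is a 2-matching of `G`: values in `{0,1,2}`, supported on edges,
and the total value on edges incident to each node is at most 2. -/
def IsTwoMatching [Fintype V] (G : SimpleGraph V) (x : Sym2 V → ℕ) : Prop :=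
  (∀ e, x e ≠ 0 → e ∈ G.edgeSet) ∧ (∀ e, x e ≤ 2) ∧
  (∀ v : V, ∑ e ∈ Finset.univ.filter (fun e : Sym2 V => v ∈ e), x e ≤ 2)

/-- The size of a 2-matching. -/
def size [Fintype V] (x : Sym2 V → ℕ) : ℕ := ∑ e : Sym2 V, x e

/-- A set of edges contains a triangle. -/
def HasTriangle (s : Set (Sym2 V)) : Prop :=
  ∃ a b c : V, a ≠ b ∧ a ≠ c ∧ b ≠ c ∧ s(a, b) ∈ s ∧ s(a, c) ∈ s ∧ s(b, c) ∈ s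

/-- A 2-matching is triangle-free if its support contains no triangle. -/
def IsTriangleFree (x : Sym2 V → ℕ) : Prop := ¬ HasTriangle {e | x e ≠ 0}

/-- `ν₂(G)`: the maximum size of a 2-matching of `G`. -/
def nu2 [Fintype V] (G : SimpleGraph V) : ℕ :=
  sSup {k | ∃ x, IsTwoMatching G x ∧ size x = k}

/-- `ν₂³(G)`: the maximum size of a triangle-free 2-matching of `G`. -/
def nu23 [Fintype V] (G : SimpleGraph V) : ℕ :=
  sSup {k | ∃ x, IsTwoMatching G x ∧ IsTriangleFree x ∧ size x = k}

/-- The number of isolated nodes of a graph. -/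
def isolatedCount (H : SimpleGraph W) : ℕ :=
  Nat.card {v : W // ∀ w, ¬ H.Adj v w}

/-- `v` is a cut vertex (articulation point) of `H`. -/
def IsCutVertex (H : SimpleGraph W) (v : W) : Prop :=
  H.Connected ∧ ¬ (H.induce {w | w ≠ v}).Connected

/-- `H` is a triangle cluster, witnessed by the collection `T` of (vertex sets of) triangles:
`H` is connected, the edges of `H` partition into the triangles of `T`, any two triangles
of `T` share at most one node, and any such shared node is a cut vertex of `H`. -/
def IsTriangleClusterWith (H : SimpleGraph W) (T : Set (Finset W)) : Prop :=
  H.Connected ∧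
  (∀ t ∈ T, t.card = 3 ∧ ∀ u ∈ t, ∀ v ∈ t, u ≠ v → H.Adj u v) ∧
  (∀ u v : W, H.Adj u v → ∃! t, t ∈ T ∧ u ∈ t ∧ v ∈ t) ∧
  (∀ t₁ ∈ T, ∀ t₂ ∈ T, t₁ ≠ t₂ → (t₁ ∩ t₂).card ≤ 1) ∧
  (∀ t₁ ∈ T, ∀ t₂ ∈ T, t₁ ≠ t₂ → ∀ v ∈ t₁ ∩ t₂, IsCutVertex H v)

/-- `H` is a triangle cluster. -/
def IsTriangleCluster (H : SimpleGraph W) : Prop :=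
  ∃ T : Set (Finset W), IsTriangleClusterWith H T

/-- The number of connected components of `H` that are triangle clusters. -/
def clusterCount (H : SimpleGraph W) : ℕ :=
  Nat.card {c : H.ConnectedComponent // IsTriangleCluster (H.induce c.supp)}

/-- The number of connected components of `H` with an odd number of nodes. -/
def oddComponentCount (H : SimpleGraph W) : ℕ :=
  Nat.card {c : H.ConnectedComponent // Odd (Nat.card c.supp)}

/-- A graph is factor-critical if deleting any single node leaves a graph
with a perfect matching. -/
def IsFactorCritical (G : SimpleGraph V) : Prop :=
  ∀ v : V, ∃ M : (G.induce {w | w ≠ v}).Subgraph, M.IsPerfectMatching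

/-- `M` is a maximum(-size) matching of `G`. -/
def IsMaximumMatching (G : SimpleGraph V) (M : G.Subgraph) : Prop :=
  M.IsMatching ∧ ∀ M' : G.Subgraph, M'.IsMatching → M'.edgeSet.ncard ≤ M.edgeSet.ncard

/-- `ν(G)`: the maximum size of a matching of `G`. -/
def matchingNumber [Fintype V] (G : SimpleGraph V) : ℕ :=
  sSup {k | ∃ M : G.Subgraph, M.IsMatching ∧ M.edgeSet.ncard = k}

/-- A 2-matching is basic if the set of edges of value 1 partitions into a collection
of node-disjoint circuits of odd length. -/
def IsBasic (G : SimpleGraph V) (x : Sym2 V → ℕ) : Prop :=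
  ∃ C : Set (Σ v : V, G.Walk v v),
    (∀ c ∈ C, c.2.IsCycle ∧ Odd c.2.length) ∧
    (∀ c₁ ∈ C, ∀ c₂ ∈ C, c₁ ≠ c₂ →
      Disjoint {v | v ∈ c₁.2.support} {v | v ∈ c₂.2.support}) ∧
    {e | x e = 1} = ⋃ c ∈ C, {e | e ∈ c.2.edges}

/-- `F` is (the edge set of) a 2-regular spanning subgraph of `G`. -/
def IsTwoRegularSpanning (G : SimpleGraph V) (F : Set (Sym2 V)) : Prop :=
  F ⊆ G.edgeSet ∧ ∀ v : V, {e ∈ F | v ∈ e}.ncard = 2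


section Aux

variable [Fintype V] {G : SimpleGraph V}

private lemma sum_degx (x : Sym2 V → ℕ) (A : Finset V) :
    ∑ v ∈ A, ∑ e ∈ Finset.univ.filter (fun e : Sym2 V => v ∈ e), x e
      = ∑ e : Sym2 V, x e * (A.filter (fun v => v ∈ e)).card := by
  simp_rw [Finset.sum_filter]
  rw [Finset.sum_comm]
  refine Finset.sum_congr rfl fun e _ => ?_
  rw [← Finset.sum_filter, Finset.sum_const, smul_eq_mul, mul_comm]

private lemma card_mem_edge {e : Sym2 V} (hG : e ∈ G.edgeSet) :
    (Finset.univ.filter (fun v : V => v ∈ e)).card = 2 := by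
  induction e using Sym2.ind with
  | _ a b =>
    rw [SimpleGraph.mem_edgeSet] at hG
    have hab : a ≠ b := hG.ne
    have h : Finset.univ.filter (fun v : V => v ∈ s(a, b)) = {a, b} := by
      ext v; simp [Sym2.mem_iff]
    rw [h, Finset.card_insert_of_notMem (by simp [hab]), Finset.card_singleton]

private lemma le_bound {x : Sym2 V → ℕ} (hx : IsTwoMatching G x) (U : Set V) :
    size x + isolatedCount (G.induce Uᶜ) ≤ Fintype.card V + U.ncard := by
  classical
  set I : Finset V := Finset.univ.filter
      (fun v => v ∉ U ∧ ∀ w, w ∉ U → ¬ G.Adj v w) with hI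
  -- isolatedCount ≤ I.card
  have h_iso : isolatedCount (G.induce Uᶜ) ≤ I.card := by
    rw [isolatedCount, Nat.card_eq_fintype_card, ← Fintype.card_coe I]
    refine Fintype.card_le_of_injective
      (fun p => ⟨(p.1 : V), ?_⟩) ?_
    · rw [hI, Finset.mem_filter]
      refine ⟨Finset.mem_univ _, p.1.2, fun w hw hadj => ?_⟩
      exact p.2 ⟨w, hw⟩ hadj
    · intro p q hpq
      simp only [Subtype.mk.injEq] at hpq
      exact Subtype.ext (Subtype.ext hpq)
  -- handshake pieces
  have hsplit : ∑ v : V, ∑ e ∈ Finset.univ.filter (fun e : Sym2 V => v ∈ e), x e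
      = 2 * size x := by
    rw [sum_degx, size, Finset.mul_sum]
    refine Finset.sum_congr rfl fun e _ => ?_
    by_cases h : x e = 0
    · simp [h]
    · rw [Finset.filter_congr (fun v _ => Iff.rfl), card_mem_edge (hx.1 e h)]
      ring
  have h_key : ∀ e : Sym2 V, x e ≠ 0 →
      (I.filter (fun v => v ∈ e)).card ≤ (U.toFinset.filter (fun v => v ∈ e)).card := by
    intro e he
    have hedge := hx.1 e he
    induction e using Sym2.ind with
    | _ a b =>
      rw [SimpleGraph.mem_edgeSet] at hedge
      rcases Finset.eq_empty_or_nonempty (I.filter (fun v => v ∈ s(a, b))) with h0 | ⟨v, hv⟩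
      · rw [h0]; simp
      · rw [Finset.mem_filter] at hv
        obtain ⟨hvI, hve⟩ := hv
        have hvI' : v ∉ U ∧ ∀ w, w ∉ U → ¬ G.Adj v w := by
          rw [hI, Finset.mem_filter] at hvI; exact hvI.2
        rw [Sym2.mem_iff] at hve
        obtain ⟨u, hadj, hue⟩ : ∃ u, G.Adj v u ∧ u ∈ s(a, b) := by
          rcases hve with rfl | rfl
          · exact ⟨b, hedge, by simp⟩
          · exact ⟨a, hedge.symm, by simp⟩
        have huU : u ∈ U := by
          by_contra h
          exact hvI'.2 u h hadj
        have hsub : I.filter (fun v => v ∈ s(a, b)) ⊆ {v} := by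
          intro z hz
          rw [Finset.mem_filter] at hz
          obtain ⟨hzI, hze⟩ := hz
          have hzI' : z ∉ U ∧ ∀ w, w ∉ U → ¬ G.Adj z w := by
            rw [hI, Finset.mem_filter] at hzI; exact hzI.2
          rw [Finset.mem_singleton]
          by_contra hzv
          -- z and v are the two distinct endpoints, and u is one of them
          have hab : a ≠ b := hedge.ne
          have hzu : z ≠ u := fun h => hzI'.1 (by rw [h]; exact huU)
          have hvu : v ≠ u := fun h => hvI'.1 (by rw [h]; exact huU)
          have hze' : z = a ∨ z = b := Sym2.mem_iff.mp hze
          have hue' : u = a ∨ u = b := Sym2.mem_iff.mp hue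
          rcases hze' with rfl | rfl <;> rcases hve with rfl | rfl <;>
            rcases hue' with rfl | rfl <;> simp_all
        calc (I.filter (fun v => v ∈ s(a, b))).card
            ≤ ({v} : Finset V).card := Finset.card_le_card hsub
          _ = 1 := Finset.card_singleton v
          _ ≤ (U.toFinset.filter (fun v => v ∈ s(a, b))).card := by
              rw [Nat.one_le_iff_ne_zero, ← Nat.pos_iff_ne_zero, Finset.card_pos]
              exact ⟨u, Finset.mem_filter.2 ⟨Set.mem_toFinset.2 huU, hue⟩⟩
  have h_I : ∑ v ∈ I, ∑ e ∈ Finset.univ.filter (fun e : Sym2 V => v ∈ e), x e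
      ≤ 2 * U.toFinset.card := by
    calc ∑ v ∈ I, ∑ e ∈ Finset.univ.filter (fun e : Sym2 V => v ∈ e), x e
        = ∑ e : Sym2 V, x e * (I.filter (fun v => v ∈ e)).card := sum_degx x I
      _ ≤ ∑ e : Sym2 V, x e * (U.toFinset.filter (fun v => v ∈ e)).card := by
          refine Finset.sum_le_sum fun e _ => ?_
          by_cases h : x e = 0
          · simp [h]
          · exact Nat.mul_le_mul_left _ (h_key e h)
      _ = ∑ v ∈ U.toFinset, ∑ e ∈ Finset.univ.filter (fun e : Sym2 V => v ∈ e), x e :=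
          (sum_degx x U.toFinset).symm
      _ ≤ ∑ v ∈ U.toFinset, 2 := Finset.sum_le_sum fun v _ => hx.2.2 v
      _ = 2 * U.toFinset.card := by rw [Finset.sum_const, smul_eq_mul, mul_comm]
  have h_compl : ∑ v ∈ Finset.univ \ I, ∑ e ∈ Finset.univ.filter (fun e : Sym2 V => v ∈ e), x e
      ≤ 2 * (Finset.univ \ I).card := by
    calc ∑ v ∈ Finset.univ \ I, ∑ e ∈ Finset.univ.filter (fun e : Sym2 V => v ∈ e), x e
        ≤ ∑ _v ∈ Finset.univ \ I, 2 := Finset.sum_le_sum fun v _ => hx.2.2 v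
      _ = 2 * (Finset.univ \ I).card := by rw [Finset.sum_const, smul_eq_mul, mul_comm]
  have h_univ_split : ∑ v : V, ∑ e ∈ Finset.univ.filter (fun e : Sym2 V => v ∈ e), x e
      = (∑ v ∈ I, ∑ e ∈ Finset.univ.filter (fun e : Sym2 V => v ∈ e), x e)
        + ∑ v ∈ Finset.univ \ I, ∑ e ∈ Finset.univ.filter (fun e : Sym2 V => v ∈ e), x e := by
    rw [← Finset.sum_union (Finset.disjoint_sdiff)]
    congr 1
    rw [Finset.union_sdiff_of_subset (Finset.subset_univ I)]
  have hIcard : (Finset.univ \ I).card = Fintype.card V - I.card := by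
    rw [Finset.card_sdiff_of_subset (Finset.subset_univ I), Finset.card_univ]
  have hle : I.card ≤ Fintype.card V := by
    rw [← Finset.card_univ]; exact Finset.card_le_card (Finset.subset_univ I)
  have hnc : U.ncard = U.toFinset.card := Set.ncard_eq_toFinset_card' U
  omega

private def nbr (G : SimpleGraph V) (S : Finset V) : Finset V := S.biUnion fun v => G.neighborFinset v

private def dG (G : SimpleGraph V) : ℕ := Finset.univ.powerset.sup fun S : Finset V =>
  if ∀ a ∈ S, ∀ b ∈ S, ¬ G.Adj a b then S.card - (nbr G S).card else 0

private lemma hall_cond (G : SimpleGraph V) (s : Finset V) :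
    s.card ≤ (nbr G s).card + dG G := by
  classical
  set s₀ := s \ nbr G s with hs₀
  have hind : ∀ a ∈ s₀, ∀ b ∈ s₀, ¬ G.Adj a b := by
    intro a ha b hb hadj
    have hb' : b ∈ nbr G s := Finset.mem_biUnion.2
      ⟨a, (Finset.mem_sdiff.1 ha).1, (SimpleGraph.mem_neighborFinset _ _ _).2 hadj⟩
    exact (Finset.mem_sdiff.1 hb).2 hb'
  have h1 : s₀.card - (nbr G s₀).card ≤ dG G := by
    refine le_trans ?_ (Finset.le_sup (Finset.mem_powerset.2 (Finset.subset_univ s₀)))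
    rw [if_pos hind]
  have hdisj : Disjoint (nbr G s₀) (s ∩ nbr G s) := by
    rw [Finset.disjoint_left]
    intro v hv hv2
    obtain ⟨t, ht, hvt⟩ := Finset.mem_biUnion.1 hv
    have hadj : G.Adj t v := (SimpleGraph.mem_neighborFinset _ _ _).1 hvt
    have ht' : t ∈ nbr G s := Finset.mem_biUnion.2
      ⟨v, (Finset.mem_inter.1 hv2).1, (SimpleGraph.mem_neighborFinset _ _ _).2 hadj.symm⟩
    exact (Finset.mem_sdiff.1 ht).2 ht'
  have hsub : nbr G s₀ ∪ (s ∩ nbr G s) ⊆ nbr G s := by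
    intro v hv
    rcases Finset.mem_union.1 hv with h | h
    · obtain ⟨t, ht, hvt⟩ := Finset.mem_biUnion.1 h
      exact Finset.mem_biUnion.2 ⟨t, (Finset.mem_sdiff.1 ht).1, hvt⟩
    · exact (Finset.mem_inter.1 h).2
  have h2 : (nbr G s₀).card + (s ∩ nbr G s).card ≤ (nbr G s).card := by
    rw [← Finset.card_union_of_disjoint hdisj]
    exact Finset.card_le_card hsub
  have h3 : s₀.card + (s ∩ nbr G s).card = s.card := Finset.card_sdiff_add_card_inter s _
  omega

private lemma exists_dG_witness (G : SimpleGraph V) : ∃ S : Finset V,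
    (∀ a ∈ S, ∀ b ∈ S, ¬ G.Adj a b) ∧ dG G = S.card - (nbr G S).card := by
  classical
  obtain ⟨S, -, hS⟩ := Finset.exists_mem_eq_sup Finset.univ.powerset
    ⟨∅, Finset.empty_mem_powerset _⟩
    (fun S : Finset V => if ∀ a ∈ S, ∀ b ∈ S, ¬ G.Adj a b then S.card - (nbr G S).card else 0)
  by_cases h : ∀ a ∈ S, ∀ b ∈ S, ¬ G.Adj a b
  · refine ⟨S, h, ?_⟩
    rw [dG, hS, if_pos h]
  · refine ⟨∅, by simp, ?_⟩
    rw [dG, hS, if_neg h]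
    simp [nbr]

private lemma exists_hall_f (G : SimpleGraph V) :
    ∃ f : V → V ⊕ Fin (dG G), Function.Injective f ∧
      ∀ v, f v ∈ (G.neighborFinset v).disjSum (Finset.univ : Finset (Fin (dG G))) := by
  classical
  rw [← Finset.all_card_le_biUnion_card_iff_exists_injective]
  intro s
  rcases s.eq_empty_or_nonempty with rfl | ⟨v₀, hv₀⟩
  · simp
  · have hsub : (nbr G s).disjSum (Finset.univ : Finset (Fin (dG G))) ⊆
        s.biUnion (fun v => (G.neighborFinset v).disjSum Finset.univ) := by
      intro a ha
      rcases a with w | y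
      · rw [Finset.inl_mem_disjSum] at ha
        obtain ⟨t, ht, hw⟩ := Finset.mem_biUnion.1 ha
        exact Finset.mem_biUnion.2 ⟨t, ht, Finset.inl_mem_disjSum.2 hw⟩
      · exact Finset.mem_biUnion.2 ⟨v₀, hv₀, Finset.inr_mem_disjSum.2 (Finset.mem_univ y)⟩
    calc s.card ≤ (nbr G s).card + dG G := hall_cond G s
      _ = ((nbr G s).disjSum (Finset.univ : Finset (Fin (dG G)))).card := by
          rw [Finset.card_disjSum, Finset.card_univ, Fintype.card_fin]
      _ ≤ _ := Finset.card_le_card hsub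

private lemma exists_good (G : SimpleGraph V) : ∃ (x : Sym2 V → ℕ) (U : Set V),
    IsTwoMatching G x ∧
    Fintype.card V + U.ncard - isolatedCount (G.induce Uᶜ) ≤ size x := by
  classical
  obtain ⟨k, hk, f, hfinj, hf⟩ :
      ∃ k, k = dG G ∧ ∃ f : V → V ⊕ Fin k, Function.Injective f ∧
        ∀ v, f v ∈ (G.neighborFinset v).disjSum (Finset.univ : Finset (Fin k)) :=
    ⟨dG G, rfl, exists_hall_f G⟩
  set term : V → Sym2 V → ℕ := fun v e =>
    Sum.elim (fun w => if e = s(v, w) then 1 else 0) (fun _ => 0) (f v) with hterm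
  set x : Sym2 V → ℕ := fun e => ∑ v : V, term v e with hxdef
  have hterm_le : ∀ v e, term v e ≤ 1 := by
    intro v e
    rcases hfv : f v with w | y
    · simp only [hterm, hfv, Sum.elim_inl]
      split <;> omega
    · simp [hterm, hfv]
  have hterm_ne : ∀ v e, term v e ≠ 0 → ∃ w, f v = Sum.inl w ∧ e = s(v, w) := by
    intro v e h
    rcases hfv : f v with w | y
    · refine ⟨w, rfl, ?_⟩
      by_contra hne
      exact h (by simp [hterm, hfv, hne])
    · exact absurd (by simp [hterm, hfv]) h
  have hadj_of : ∀ v w, f v = Sum.inl w → G.Adj v w := by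
    intro v w hvw
    have h := hf v
    rw [hvw, Finset.inl_mem_disjSum, SimpleGraph.mem_neighborFinset] at h
    exact h
  have hsupp : ∀ e, x e ≠ 0 → e ∈ G.edgeSet := by
    intro e he
    obtain ⟨v, -, hv⟩ := Finset.exists_ne_zero_of_sum_ne_zero he
    obtain ⟨w, hfw, rfl⟩ := hterm_ne v e hv
    exact (SimpleGraph.mem_edgeSet G).2 (hadj_of v w hfw)
  have hle2 : ∀ e, x e ≤ 2 := by
    intro e
    induction e using Sym2.ind with
    | _ a b =>
      have hcard : (Finset.univ.filter (fun v : V => v = a ∨ v = b)).card ≤ 2 := by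
        refine le_trans (Finset.card_le_card (fun v hv => ?_)) (le_trans (Finset.card_insert_le a {b}) (by simp))
        rcases (Finset.mem_filter.1 hv).2 with rfl | rfl <;> simp
      calc x s(a, b) = ∑ v : V, term v s(a, b) := rfl
        _ ≤ ∑ v : V, (if v = a ∨ v = b then 1 else 0) := by
            refine Finset.sum_le_sum fun v _ => ?_
            by_cases h : term v s(a, b) = 0
            · simp [h]
            · obtain ⟨w, hfw, he⟩ := hterm_ne v _ h
              have hv : v = a ∨ v = b := by
                have : v ∈ s(a, b) := he ▸ Sym2.mem_mk_left v w
                exact Sym2.mem_iff.1 this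
              rw [if_pos hv]
              exact hterm_le v _
        _ = ((Finset.univ : Finset V).filter (fun v => v = a ∨ v = b)).card := by
            rw [← Finset.sum_filter, Finset.sum_const, smul_eq_mul, mul_one]
        _ ≤ 2 := hcard
  have hdeg : ∀ v₀ : V, ∑ e ∈ Finset.univ.filter (fun e : Sym2 V => v₀ ∈ e), x e ≤ 2 := by
    intro v₀
    have hswap : ∑ e ∈ Finset.univ.filter (fun e : Sym2 V => v₀ ∈ e), x e
        = ∑ v : V, ∑ e ∈ Finset.univ.filter (fun e : Sym2 V => v₀ ∈ e), term v e :=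
      Finset.sum_comm
    set g : V → ℕ := fun v => ∑ e ∈ Finset.univ.filter (fun e : Sym2 V => v₀ ∈ e), term v e
      with hg
    have hg_le : ∀ v, g v ≤ 1 := by
      intro v
      rcases hfv : f v with w | y
      · calc g v ≤ ∑ e : Sym2 V, term v e :=
              Finset.sum_le_sum_of_subset (Finset.filter_subset _ _)
          _ = ∑ e : Sym2 V, (if e = s(v, w) then 1 else 0) := by
              refine Finset.sum_congr rfl fun e _ => ?_
              simp [hterm, hfv]
          _ = 1 := by rw [Finset.sum_ite_eq' Finset.univ (s(v, w)) (fun _ => 1)]; simp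
      · simp [hg, hterm, hfv]
    have hg_supp : ∀ v, g v ≠ 0 → v = v₀ ∨ f v = Sum.inl v₀ := by
      intro v hgv
      obtain ⟨e, he, hne⟩ := Finset.exists_ne_zero_of_sum_ne_zero hgv
      obtain ⟨w, hfw, rfl⟩ := hterm_ne v e hne
      have hv₀ : v₀ ∈ s(v, w) := (Finset.mem_filter.1 he).2
      rcases Sym2.mem_iff.1 hv₀ with rfl | rfl
      · exact Or.inl rfl
      · exact Or.inr hfw
    have hcard2 : (Finset.univ.filter (fun v : V => g v ≠ 0)).card ≤ 2 := by
      have hsub2 : Finset.univ.filter (fun v : V => g v ≠ 0)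
          ⊆ {v₀} ∪ Finset.univ.filter (fun v => f v = Sum.inl v₀) := by
        intro v hv
        rcases hg_supp v (Finset.mem_filter.1 hv).2 with rfl | h
        · simp
        · exact Finset.mem_union_right _ (Finset.mem_filter.2 ⟨Finset.mem_univ _, h⟩)
      have hone : (Finset.univ.filter (fun v : V => f v = Sum.inl v₀)).card ≤ 1 := by
        rw [Finset.card_le_one]
        intro p hp q hq
        exact hfinj ((Finset.mem_filter.1 hp).2.trans (Finset.mem_filter.1 hq).2.symm)
      calc (Finset.univ.filter (fun v : V => g v ≠ 0)).card
          ≤ ({v₀} ∪ Finset.univ.filter (fun v => f v = Sum.inl v₀)).card :=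
            Finset.card_le_card hsub2
        _ ≤ 1 + 1 := le_trans (Finset.card_union_le _ _) (by simp [hone]; omega)
        _ = 2 := rfl
    calc ∑ e ∈ Finset.univ.filter (fun e : Sym2 V => v₀ ∈ e), x e
        = ∑ v : V, g v := hswap
      _ = ∑ v ∈ Finset.univ.filter (fun v : V => g v ≠ 0), g v :=
          (Finset.sum_filter_ne_zero Finset.univ).symm
      _ ≤ ∑ _v ∈ Finset.univ.filter (fun v : V => g v ≠ 0), 1 :=
          Finset.sum_le_sum fun v _ => hg_le v
      _ = (Finset.univ.filter (fun v : V => g v ≠ 0)).card := by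
          rw [Finset.sum_const, smul_eq_mul, mul_one]
      _ ≤ 2 := hcard2
  -- size bound
  have hsize : Fintype.card V ≤ size x + k := by
    set r : V → ℕ := fun v => Sum.elim (fun _ => 0) (fun _ => 1) (f v) with hr
    have hone : ∀ v : V, (1 : ℕ) = (∑ e : Sym2 V, term v e) + r v := by
      intro v
      rcases hfv : f v with w | y
      · have h1 : ∑ e : Sym2 V, term v e = ∑ e : Sym2 V, (if e = s(v, w) then 1 else 0) := by
          refine Finset.sum_congr rfl fun e _ => ?_
          simp [hterm, hfv]
        have h2 : (∑ e : Sym2 V, if e = s(v, w) then 1 else 0) = 1 := by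
          rw [Finset.sum_ite_eq' Finset.univ (s(v, w)) (fun _ => 1)]; simp
        simp [hr, hfv, h1, h2]
      · simp [hr, hterm, hfv]
    have hsum : Fintype.card V = size x + ∑ v : V, r v := by
      calc Fintype.card V = ∑ _v : V, (1 : ℕ) := by simp
        _ = ∑ v : V, ((∑ e : Sym2 V, term v e) + r v) :=
            Finset.sum_congr rfl fun v _ => hone v
        _ = (∑ v : V, ∑ e : Sym2 V, term v e) + ∑ v : V, r v := Finset.sum_add_distrib
        _ = size x + ∑ v : V, r v := by rw [size, Finset.sum_comm]
    have hrk : ∑ v : V, r v ≤ k := by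
      have h1 : ∑ v : V, r v
          = (Finset.univ.filter (fun v : V => (f v).isRight = true)).card := by
        have h0 : ∀ v : V, r v = (if (f v).isRight = true then 1 else 0) := by
          intro v
          rcases hfv : f v with w | y <;> simp [hr, hfv]
        simp_rw [h0]
        rw [← Finset.sum_filter, Finset.sum_const, smul_eq_mul, mul_one]
      rw [h1, ← Finset.card_image_of_injective _ hfinj]
      have hsub3 : (Finset.univ.filter (fun v : V => (f v).isRight = true)).image f
          ⊆ Finset.univ.map ⟨Sum.inr, Sum.inr_injective⟩ := by
        intro b hb
        obtain ⟨v, hv, rfl⟩ := Finset.mem_image.1 hb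
        have := (Finset.mem_filter.1 hv).2
        rcases hfv : f v with w | y
        · rw [hfv] at this; simp at this
        · exact Finset.mem_map.2 ⟨y, Finset.mem_univ _, rfl⟩
      calc ((Finset.univ.filter (fun v : V => (f v).isRight = true)).image f).card
          ≤ (Finset.univ.map ⟨Sum.inr, Sum.inr_injective⟩ : Finset (V ⊕ Fin k)).card :=
            Finset.card_le_card hsub3
        _ = k := by rw [Finset.card_map, Finset.card_univ, Fintype.card_fin]
    omega
  -- choose U
  obtain ⟨S, hSind, hSd⟩ := exists_dG_witness G
  by_cases hcase : S.card ≤ (nbr G S).card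
  · refine ⟨x, ∅, ⟨hsupp, hle2, hdeg⟩, ?_⟩
    have hk0 : k = 0 := by rw [hk, hSd]; omega
    have hsz : Fintype.card V ≤ size x := by omega
    have : (∅ : Set V).ncard = 0 := Set.ncard_empty V
    omega
  · refine ⟨x, ↑(nbr G S), ⟨hsupp, hle2, hdeg⟩, ?_⟩
    have hSnot : ∀ v ∈ S, v ∉ (↑(nbr G S) : Set V) := by
      intro v hv hvn
      obtain ⟨t, ht, hvt⟩ := Finset.mem_biUnion.1 (Finset.mem_coe.1 hvn)
      exact hSind t ht v hv ((SimpleGraph.mem_neighborFinset _ _ _).1 hvt)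
    have hiso : S.card ≤ isolatedCount (G.induce (↑(nbr G S) : Set V)ᶜ) := by
      rw [isolatedCount, Nat.card_eq_fintype_card, ← Fintype.card_coe S]
      refine Fintype.card_le_of_injective
        (fun p => ⟨⟨(p : V), hSnot p p.2⟩, fun w hadj => ?_⟩) ?_
      · refine w.2 (Finset.mem_coe.2 (Finset.mem_biUnion.2
          ⟨(p : V), p.2, (SimpleGraph.mem_neighborFinset _ _ _).2 hadj⟩))
      · intro p q hpq
        simp only [Subtype.mk.injEq] at hpq
        exact Subtype.ext hpq
    have hnc : (↑(nbr G S) : Set V).ncard = (nbr G S).card := Set.ncard_coe_finset _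
    have hp : S.card ≤ Fintype.card V := by
      rw [← Finset.card_univ]; exact Finset.card_le_card (Finset.subset_univ S)
    have hd : k = S.card - (nbr G S).card := by rw [hk, hSd]
    omega

end Aux

theorem stmt0 [Fintype V] (G : SimpleGraph V) :
    nu2 G =
      sInf {m : ℕ | ∃ U : Set V,
        m = Fintype.card V + U.ncard - isolatedCount (G.induce Uᶜ)} := by
  classical
  have hMne : {k | ∃ x, IsTwoMatching G x ∧ size x = k}.Nonempty := by
    refine ⟨0, fun _ => 0, ⟨fun e h => absurd rfl h, fun e => by norm_num, fun v => by simp⟩,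
      by simp [size]⟩
  have hMbdd : BddAbove {k | ∃ x, IsTwoMatching G x ∧ size x = k} := by
    refine ⟨2 * Fintype.card (Sym2 V), ?_⟩
    rintro k ⟨x, hx, rfl⟩
    calc size x ≤ ∑ _e : Sym2 V, 2 := Finset.sum_le_sum fun e _ => hx.2.1 e
      _ = 2 * Fintype.card (Sym2 V) := by
          rw [Finset.sum_const, smul_eq_mul, mul_comm, Finset.card_univ]
  have hSne : {m : ℕ | ∃ U : Set V,
      m = Fintype.card V + U.ncard - isolatedCount (G.induce Uᶜ)}.Nonempty := ⟨_, ∅, rfl⟩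
  rw [nu2]
  apply le_antisymm
  · refine csSup_le hMne ?_
    rintro k ⟨x, hx, rfl⟩
    refine le_csInf hSne ?_
    rintro m ⟨U, rfl⟩
    have h := le_bound hx U
    omega
  · obtain ⟨x, U, hx, hle⟩ := exists_good G
    exact le_trans (Nat.sInf_le ⟨U, rfl⟩) (le_trans hle (le_csSup hMbdd ⟨x, hx, rfl⟩))

end

end TF
end

section
/- Let d ≥ 3 and let G be a d-regular finite simple undirected graph. Then for every subset U ⊆ VG, the number of connected components of G − U that are triangle clusters is at most |U|; that is, cluster(G − U) ≤ |U|. -/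
open scoped Classical

namespace TF

noncomputable section

variable {V : Type*} {W : Type*}

section AuxLemmas

lemma reachable_induce_of_walk {G : SimpleGraph V} {s : Set V} :
    ∀ {a b : V} (p : G.Walk a b), (∀ x ∈ p.support, x ∈ s) →
      ∀ (ha : a ∈ s) (hb : b ∈ s), (G.induce s).Reachable ⟨a, ha⟩ ⟨b, hb⟩ := by
  intro a b p
  induction p with
  | nil => intro _ ha hb; rfl
  | @cons u x b h q ih =>
    intro hs ha hb
    have hx : x ∈ s := hs x (by simp)
    have h1 : (G.induce s).Adj ⟨u, ha⟩ ⟨x, hx⟩ := by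
      simpa using h
    exact h1.reachable.trans (ih (fun y hy => hs y (by simp [hy])) hx hb)

lemma induce_connected_of_max_dist {G : SimpleGraph V} [Fintype V] (hc : G.Connected)
    {w v : V} (hmax : ∀ u, G.dist w u ≤ G.dist w v) (hwv : w ≠ v) :
    (G.induce {x | x ≠ v}).Connected := by
  rw [SimpleGraph.connected_iff]
  have key : ∀ (u : {x // x ≠ v}), (G.induce {x | x ≠ v}).Reachable ⟨w, hwv⟩ u := by
    rintro ⟨u, hu⟩
    obtain ⟨p, hp⟩ := hc.exists_walk_length_eq_dist w u
    have hsup : ∀ x ∈ p.support, x ∈ {x | x ≠ v} := by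
      intro x hxp
      simp only [Set.mem_setOf_eq]
      rintro rfl
      have h1 : G.dist w x ≤ (p.takeUntil x hxp).length := SimpleGraph.dist_le _
      have h2 : G.dist x u ≤ (p.dropUntil x hxp).length := SimpleGraph.dist_le _
      have h3 : (p.takeUntil x hxp).length + (p.dropUntil x hxp).length = p.length := by
        rw [← SimpleGraph.Walk.length_append, p.take_spec hxp]
      have h4 : G.dist w u ≤ G.dist w x := hmax u
      have h5 : G.dist u x = 0 := by rw [SimpleGraph.dist_comm]; omega
      exact hu ((hc.dist_eq_zero_iff).mp h5)
    exact reachable_induce_of_walk p hsup hwv hu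
  exact ⟨fun a b => (key a).symm.trans (key b), ⟨⟨w, hwv⟩⟩⟩

lemma noncut_exists_aux {G : SimpleGraph W} [Fintype W] (hc : G.Connected) (w : W)
    (hne : ∃ u : W, u ≠ w) : ∃ v : W, v ≠ w ∧ ¬ IsCutVertex G v := by
  obtain ⟨v, -, hmax⟩ := Finset.exists_max_image Finset.univ (G.dist w)
    ⟨w, Finset.mem_univ w⟩
  obtain ⟨u, hu⟩ := hne
  have hdu : 0 < G.dist w u := hc.pos_dist_of_ne (Ne.symm hu)
  have hdv : 0 < G.dist w v := lt_of_lt_of_le hdu (hmax u (Finset.mem_univ u))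
  have hwv : w ≠ v := by
    rintro rfl; rw [SimpleGraph.dist_self] at hdv; exact lt_irrefl 0 hdv
  refine ⟨v, Ne.symm hwv, ?_⟩
  rintro ⟨-, hnc⟩
  exact hnc (induce_connected_of_max_dist hc (fun u => hmax u (Finset.mem_univ u)) hwv)

lemma exists_two_noncut {G : SimpleGraph W} [Fintype W] (hc : G.Connected)
    (h2 : Nontrivial W) :
    ∃ v₁ v₂ : W, v₁ ≠ v₂ ∧ ¬ IsCutVertex G v₁ ∧ ¬ IsCutVertex G v₂ := by
  obtain ⟨a, b, hab⟩ := h2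
  obtain ⟨v₁, hv₁a, hv₁⟩ := noncut_exists_aux hc a ⟨b, Ne.symm hab⟩
  obtain ⟨v₂, hv₂, hv₂nc⟩ := noncut_exists_aux hc v₁ ⟨a, Ne.symm hv₁a⟩
  exact ⟨v₁, v₂, Ne.symm hv₂, hv₁, hv₂nc⟩

lemma key_cluster [Fintype V] (G : SimpleGraph V) {d : ℕ} (hd : 3 ≤ d)
    (hreg : G.IsRegularOfDegree d) (U : Set V)
    (c : (G.induce Uᶜ).ConnectedComponent)
    (hc : IsTriangleCluster ((G.induce Uᶜ).induce c.supp)) :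
    d ≤ (Finset.univ.filter (fun p : V × V => G.Adj p.1 p.2 ∧ p.2 ∈ U ∧
        ∃ h : p.1 ∈ Uᶜ, (G.induce Uᶜ).connectedComponentMk ⟨p.1, h⟩ = c)).card := by
  obtain ⟨T, hconn, htri, huniq, hint, hcut⟩ := hc
  set inC : V → Prop := fun v =>
    ∃ h : v ∈ Uᶜ, (G.induce Uᶜ).connectedComponentMk ⟨v, h⟩ = c with hinC
  set CV : Finset V := Finset.univ.filter inC with hCV
  set bndV : V → ℕ := fun v =>
    (Finset.univ.filter (fun u => u ∈ U ∧ G.Adj v u)).card with hbndV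
  set nbC : V → ℕ := fun v =>
    (Finset.univ.filter (fun u => inC u ∧ G.Adj v u)).card with hnbC
  set nbW : c.supp → Finset c.supp := fun w =>
    Finset.univ.filter (fun x => ((G.induce Uᶜ).induce c.supp).Adj w x) with hnbW
  set TvF : c.supp → Finset (Finset c.supp) := fun w =>
    Finset.univ.filter (fun t => t ∈ T ∧ w ∈ t) with hTvF
  -- coercion of a supp element is in CV
  have memCVw : ∀ (w : c.supp), inC ((w : ↥Uᶜ) : V) := by
    intro w
    have h2 := w.2
    rw [SimpleGraph.ConnectedComponent.mem_supp_iff] at h2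
    simp only [hinC]
    exact ⟨(w : ↥Uᶜ).2, by rwa [Subtype.coe_eta]⟩
  -- adjacency in the doubly-induced graph
  have hadjW : ∀ w x : c.supp, ((G.induce Uᶜ).induce c.supp).Adj w x ↔
      G.Adj ((w : ↥Uᶜ) : V) ((x : ↥Uᶜ) : V) := by
    intro w x
    exact Iff.rfl
  have hmemi : ∀ (D : DecidableEq (↑c.supp)) (t₁ t₂ : Finset (↑c.supp)) (v : ↑c.supp),
      v ∈ t₁ → v ∈ t₂ → v ∈ @Inter.inter _ (@Finset.instInter _ D) t₁ t₂ := by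
    intro D t₁ t₂ v h1 h2
    simp only [Finset.mem_inter]
    exact ⟨h1, h2⟩
  have hcard2 : ∀ (D : DecidableEq (↑c.supp)) (t₁ t₂ : Finset (↑c.supp)) (x y : ↑c.supp),
      x ∈ t₁ → x ∈ t₂ → y ∈ t₁ → y ∈ t₂ → x ≠ y →
      2 ≤ (@Inter.inter _ (@Finset.instInter _ D) t₁ t₂).card := by
    intro D t₁ t₂ x y hx1 hx2 hy1 hy2 hxy
    refine Finset.one_lt_card.mpr ⟨x, ?_, y, ?_, hxy⟩ <;> simp only [Finset.mem_inter]
    · exact ⟨hx1, hx2⟩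
    · exact ⟨hy1, hy2⟩
  -- splitting the degree
  have hsplit : ∀ v : V, inC v → bndV v + nbC v = d := by
    intro v hv
    have hUn : (Finset.univ.filter (fun u => u ∈ U ∧ G.Adj v u)) ∪
        (Finset.univ.filter (fun u => inC u ∧ G.Adj v u)) = G.neighborFinset v := by
      ext u
      simp only [Finset.mem_union, Finset.mem_filter, Finset.mem_univ, true_and,
        SimpleGraph.mem_neighborFinset]
      constructor
      · rintro (⟨-, h⟩ | ⟨-, h⟩) <;> exact h
      · intro hadj
        by_cases hU : u ∈ U
        · exact Or.inl ⟨hU, hadj⟩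
        · refine Or.inr ⟨⟨hU, ?_⟩, hadj⟩
          obtain ⟨hvU, hvc⟩ := hv
          rw [← hvc]
          exact SimpleGraph.ConnectedComponent.sound
            (SimpleGraph.Adj.reachable (v := (⟨v, hvU⟩ : ↥Uᶜ)) hadj.symm)
    have hdisj : Disjoint (Finset.univ.filter (fun u => u ∈ U ∧ G.Adj v u))
        (Finset.univ.filter (fun u => inC u ∧ G.Adj v u)) := by
      rw [Finset.disjoint_left]
      intro u hu1 hu2
      simp only [Finset.mem_filter, Finset.mem_univ, true_and] at hu1 hu2
      exact hu2.1.1 hu1.1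
    have hcard := Finset.card_union_of_disjoint hdisj
    rw [hUn] at hcard
    simp only [hbndV, hnbC]
    rw [← hcard]
    exact hreg v
  -- CV as an image
  have hinj : Function.Injective (fun w : c.supp => ((w : ↥Uᶜ) : V)) := by
    intro a b h
    exact Subtype.ext (Subtype.ext h)
  have hCVim : CV = Finset.univ.image (fun w : c.supp => ((w : ↥Uᶜ) : V)) := by
    ext v
    simp only [hCV, hinC, Finset.mem_filter, Finset.mem_univ, true_and, Finset.mem_image]
    constructor
    · rintro ⟨h, hc'⟩
      exact ⟨⟨⟨v, h⟩, SimpleGraph.ConnectedComponent.mem_supp_iff _ _ |>.mpr hc'⟩, rfl⟩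
    · rintro ⟨w, rfl⟩
      exact memCVw w
  have hCVcard : CV.card = Fintype.card c.supp := by
    rw [hCVim, Finset.card_image_of_injective _ hinj, Finset.card_univ]
  -- nbC at a supp element equals the size of its W-neighborhood
  have hnbCW : ∀ w : c.supp, nbC ((w : ↥Uᶜ) : V) = (nbW w).card := by
    intro w
    have him : (Finset.univ.filter (fun u => inC u ∧ G.Adj ((w : ↥Uᶜ) : V) u)) =
        (nbW w).image (fun x : c.supp => ((x : ↥Uᶜ) : V)) := by
      ext u
      simp only [Finset.mem_filter, Finset.mem_univ, true_and, Finset.mem_image, hnbW]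
      constructor
      · rintro ⟨⟨hUc, hcc⟩, hadj⟩
        exact ⟨⟨⟨u, hUc⟩, SimpleGraph.ConnectedComponent.mem_supp_iff _ _ |>.mpr hcc⟩,
          (hadjW w _).mpr hadj, rfl⟩
      · rintro ⟨x, hx, rfl⟩
        exact ⟨memCVw x, (hadjW w x).mp hx⟩
    simp only [hnbC]
    rw [him, Finset.card_image_of_injective _ hinj]
  -- upper bound: neighborhood ≤ 2 * number of triangles at w
  have h_upper : ∀ w : c.supp, (nbW w).card ≤ 2 * (TvF w).card := by
    intro w
    set f : c.supp → Finset c.supp := fun x =>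
      if hx : ((G.induce Uᶜ).induce c.supp).Adj w x then
        (huniq w x hx).exists.choose else ∅ with hf
    have hfmem : ∀ x ∈ nbW w, f x ∈ TvF w := by
      intro x hx
      simp only [hnbW, Finset.mem_filter, Finset.mem_univ, true_and] at hx
      have hspec := (huniq w x hx).exists.choose_spec
      have hfx : f x = (huniq w x hx).exists.choose := dif_pos hx
      simp only [hTvF, Finset.mem_filter, Finset.mem_univ, true_and, hfx]
      exact ⟨hspec.1, hspec.2.1⟩
    rw [Finset.card_eq_sum_card_fiberwise hfmem]
    have hfib : ∀ t ∈ TvF w, ((nbW w).filter (fun x => f x = t)).card ≤ 2 := by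
      intro t ht
      simp only [hTvF, Finset.mem_filter, Finset.mem_univ, true_and] at ht
      have hsub : (nbW w).filter (fun x => f x = t) ⊆ t.erase w := by
        intro x hx
        simp only [Finset.mem_filter] at hx
        obtain ⟨hx1, hx2⟩ := hx
        simp only [hnbW, Finset.mem_filter, Finset.mem_univ, true_and] at hx1
        have hspec := (huniq w x hx1).exists.choose_spec
        rw [Finset.mem_erase]
        refine ⟨fun hxw => (hx1.ne' hxw), ?_⟩
        have hfx : f x = (huniq w x hx1).exists.choose := dif_pos hx1
        rw [← hx2, hfx]
        exact hspec.2.2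
      calc ((nbW w).filter (fun x => f x = t)).card ≤ (t.erase w).card :=
            Finset.card_le_card hsub
        _ = 2 := by rw [Finset.card_erase_of_mem ht.2, (htri t ht.1).1]
    calc ∑ t ∈ TvF w, ((nbW w).filter (fun x => f x = t)).card
        ≤ ∑ _t ∈ TvF w, 2 := Finset.sum_le_sum hfib
      _ = 2 * (TvF w).card := by rw [Finset.sum_const, smul_eq_mul, mul_comm]
  -- lower bound: 2 * triangles at w ≤ neighborhood
  have h_lower : ∀ w : c.supp, 2 * (TvF w).card ≤ (nbW w).card := by
    intro w
    have hdisj : ∀ t₁ ∈ TvF w, ∀ t₂ ∈ TvF w, t₁ ≠ t₂ →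
        Disjoint (t₁.erase w) (t₂.erase w) := by
      intro t₁ h1 t₂ h2 hne
      simp only [hTvF, Finset.mem_filter, Finset.mem_univ, true_and] at h1 h2
      rw [Finset.disjoint_left]
      intro x hx1 hx2
      rw [Finset.mem_erase] at hx1 hx2
      refine absurd (hint t₁ h1.1 t₂ h2.1 hne) ?_
      rw [not_le]
      exact hcard2 _ t₁ t₂ x w hx1.2 hx2.2 h1.2 h2.2 hx1.1
    have hsub : (TvF w).biUnion (fun t => t.erase w) ⊆ nbW w := by
      intro x hx
      rw [Finset.mem_biUnion] at hx
      obtain ⟨t, ht, hxt⟩ := hx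
      simp only [hTvF, Finset.mem_filter, Finset.mem_univ, true_and] at ht
      rw [Finset.mem_erase] at hxt
      simp only [hnbW, Finset.mem_filter, Finset.mem_univ, true_and]
      exact (htri t ht.1).2 w ht.2 x hxt.2 (Ne.symm hxt.1)
    have herase : ∀ t ∈ TvF w, (t.erase w).card = 2 := by
      intro t ht
      simp only [hTvF, Finset.mem_filter, Finset.mem_univ, true_and] at ht
      rw [Finset.card_erase_of_mem ht.2, (htri t ht.1).1]
    calc 2 * (TvF w).card = ∑ t ∈ TvF w, (t.erase w).card := by
          rw [Finset.sum_congr rfl herase, Finset.sum_const, smul_eq_mul, mul_comm]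
      _ = ((TvF w).biUnion (fun t => t.erase w)).card := (Finset.card_biUnion hdisj).symm
      _ ≤ (nbW w).card := Finset.card_le_card hsub
  -- neighborhood is at most d
  have h_nb_le_d : ∀ w : c.supp, (nbW w).card ≤ d := by
    intro w
    rw [← hnbCW w]
    have hsub : (Finset.univ.filter (fun u => inC u ∧ G.Adj ((w : ↥Uᶜ) : V) u)) ⊆
        G.neighborFinset ((w : ↥Uᶜ) : V) := by
      intro u hu
      simp only [Finset.mem_filter, Finset.mem_univ, true_and] at hu
      exact SimpleGraph.mem_neighborFinset _ _ _ |>.mpr hu.2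
    calc nbC ((w : ↥Uᶜ) : V) ≤ (G.neighborFinset ((w : ↥Uᶜ) : V)).card :=
          Finset.card_le_card hsub
      _ = d := hreg _
  -- non-cut vertices lie in at most one triangle
  have h_noncut : ∀ w : c.supp, ¬ IsCutVertex ((G.induce Uᶜ).induce c.supp) w →
      (TvF w).card ≤ 1 := by
    intro w hnc
    by_contra hcon
    push_neg at hcon
    obtain ⟨t₁, ht₁, t₂, ht₂, hne⟩ := Finset.one_lt_card.mp hcon
    simp only [hTvF, Finset.mem_filter, Finset.mem_univ, true_and] at ht₁ ht₂
    exact hnc (hcut t₁ ht₁.1 t₂ ht₂.1 hne w (hmemi _ t₁ t₂ w ht₁.2 ht₂.2))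
  -- main counting identity
  have hgoal : (Finset.univ.filter (fun p : V × V => G.Adj p.1 p.2 ∧ p.2 ∈ U ∧
      ∃ h : p.1 ∈ Uᶜ, (G.induce Uᶜ).connectedComponentMk ⟨p.1, h⟩ = c)).card =
      ∑ v ∈ CV, bndV v := by
    rw [Finset.card_eq_sum_card_fiberwise (f := Prod.fst) (t := CV) ?_]
    · refine Finset.sum_congr rfl (fun v hv => ?_)
      simp only [hCV, Finset.mem_filter, Finset.mem_univ, true_and] at hv
      have him : ((Finset.univ.filter (fun p : V × V => G.Adj p.1 p.2 ∧ p.2 ∈ U ∧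
          ∃ h : p.1 ∈ Uᶜ, (G.induce Uᶜ).connectedComponentMk ⟨p.1, h⟩ = c)).filter
          (fun p => p.1 = v)) =
          (Finset.univ.filter (fun u => u ∈ U ∧ G.Adj v u)).image (fun u => (v, u)) := by
        ext p
        simp only [Finset.mem_filter, Finset.mem_univ, true_and, Finset.mem_image]
        constructor
        · rintro ⟨⟨hadj, hU, -⟩, rfl⟩
          exact ⟨p.2, ⟨hU, hadj⟩, rfl⟩
        · rintro ⟨u, ⟨hU, hadj⟩, rfl⟩
          exact ⟨⟨hadj, hU, hv⟩, rfl⟩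
      rw [him, Finset.card_image_of_injective _ (fun a b h => by simpa using h)]
    · intro p hp
      simp only [Finset.mem_coe, Finset.mem_filter, Finset.mem_univ, true_and] at hp
      simp only [hCV, Finset.mem_coe, Finset.mem_filter, Finset.mem_univ, true_and]
      exact hp.2.2
  rw [hgoal]
  -- case analysis
  by_cases hbig : ∃ w : c.supp, 2 ≤ (TvF w).card
  · obtain ⟨w₀, hw₀⟩ := hbig
    have hd4 : 4 ≤ d := by
      have h1 := h_lower w₀
      have h2 := h_nb_le_d w₀
      omega
    have hnt : Nontrivial c.supp := by
      have h4 : 0 < (nbW w₀).card := by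
        have := h_lower w₀; omega
      obtain ⟨x, hx⟩ := Finset.card_pos.mp h4
      simp only [hnbW, Finset.mem_filter, Finset.mem_univ, true_and] at hx
      exact ⟨⟨w₀, x, hx.ne⟩⟩
    obtain ⟨v₁, v₂, hv12, hnc1, hnc2⟩ := exists_two_noncut hconn hnt
    have hb : ∀ w : c.supp, ¬ IsCutVertex ((G.induce Uᶜ).induce c.supp) w →
        d ≤ bndV ((w : ↥Uᶜ) : V) + 2 := by
      intro w hnc
      have e1 := hsplit _ (memCVw w)
      have e2 := hnbCW w
      have e3 := h_upper w
      have e4 := h_noncut w hnc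
      omega
    have hb1 := hb v₁ hnc1
    have hb2 := hb v₂ hnc2
    have hne' : ((v₁ : ↥Uᶜ) : V) ≠ ((v₂ : ↥Uᶜ) : V) := fun h => hv12 (hinj h)
    have hsub : ({((v₁ : ↥Uᶜ) : V), ((v₂ : ↥Uᶜ) : V)} : Finset V) ⊆ CV := by
      intro y hy
      rw [Finset.mem_insert, Finset.mem_singleton] at hy
      simp only [hCV, Finset.mem_filter, Finset.mem_univ, true_and]
      rcases hy with rfl | rfl
      · exact memCVw v₁
      · exact memCVw v₂
    calc d ≤ bndV ((v₁ : ↥Uᶜ) : V) + bndV ((v₂ : ↥Uᶜ) : V) := by omega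
      _ = ∑ v ∈ ({((v₁ : ↥Uᶜ) : V), ((v₂ : ↥Uᶜ) : V)} : Finset V), bndV v :=
          (Finset.sum_pair hne').symm
      _ ≤ ∑ v ∈ CV, bndV v := Finset.sum_le_sum_of_subset hsub
  · push_neg at hbig
    have hbnd : ∀ v ∈ CV, d ≤ bndV v + 2 := by
      intro v hv
      simp only [hCV, Finset.mem_filter, Finset.mem_univ, true_and] at hv
      obtain ⟨h, hcc⟩ := hv
      set w : c.supp := ⟨⟨v, h⟩, SimpleGraph.ConnectedComponent.mem_supp_iff _ _ |>.mpr hcc⟩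
        with hw
      have e1 := hsplit v ⟨h, hcc⟩
      have e2 := hnbCW w
      have e3 := h_upper w
      have e4 : (TvF w).card ≤ 1 := by have := hbig w; omega
      have e5 : ((w : ↥Uᶜ) : V) = v := rfl
      rw [e5] at e2
      omega
    by_cases h3 : 3 ≤ CV.card
    · have hge : ∀ v ∈ CV, d - 2 ≤ bndV v := by
        intro v hv; have := hbnd v hv; omega
      have hsum : CV.card * (d - 2) ≤ ∑ v ∈ CV, bndV v := by
        calc CV.card * (d - 2) = ∑ _v ∈ CV, (d - 2) := by
              rw [Finset.sum_const, smul_eq_mul]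
          _ ≤ ∑ v ∈ CV, bndV v := Finset.sum_le_sum hge
      have h32 : 3 * (d - 2) ≤ CV.card * (d - 2) := Nat.mul_le_mul_right _ h3
      omega
    · -- CV has at most 2 elements: the component is a single vertex
      obtain ⟨v₀, hv₀⟩ := c.exists_rep
      set w₀ : c.supp := ⟨v₀, SimpleGraph.ConnectedComponent.mem_supp_iff _ _ |>.mpr hv₀⟩
        with hw₀
      have hW2 : Fintype.card c.supp ≤ 2 := by rw [← hCVcard]; omega
      have hsing : ∀ x : c.supp, x = w₀ := by
        intro x
        by_contra hx
        obtain ⟨p⟩ := hconn.preconnected x w₀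
        have hadj : ∃ a b : c.supp, ((G.induce Uᶜ).induce c.supp).Adj a b := by
          cases p with
          | nil => exact absurd rfl hx
          | cons h q => exact ⟨_, _, h⟩
        obtain ⟨a, b, hab⟩ := hadj
        obtain ⟨t, ⟨htT, -, -⟩, -⟩ := huniq a b hab
        have h33 : t.card = 3 := (htri t htT).1
        have : 3 ≤ Fintype.card c.supp := by
          rw [← h33, ← Finset.card_univ]
          exact Finset.card_le_card (Finset.subset_univ t)
        omega
      have hnb0 : (nbW w₀).card = 0 := by
        rw [Finset.card_eq_zero, Finset.eq_empty_iff_forall_notMem]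
        intro x hx
        simp only [hnbW, Finset.mem_filter, Finset.mem_univ, true_and] at hx
        exact hx.ne' (hsing x)
      have hbd : bndV ((w₀ : ↥Uᶜ) : V) = d := by
        have e1 := hsplit _ (memCVw w₀)
        have e2 := hnbCW w₀
        omega
      have hsub : ({((w₀ : ↥Uᶜ) : V)} : Finset V) ⊆ CV := by
        intro y hy
        rw [Finset.mem_singleton] at hy
        subst hy
        simp only [hCV, Finset.mem_filter, Finset.mem_univ, true_and]
        exact memCVw w₀
      calc d = bndV ((w₀ : ↥Uᶜ) : V) := hbd.symm
        _ = ∑ v ∈ ({((w₀ : ↥Uᶜ) : V)} : Finset V), bndV v := (Finset.sum_singleton _ _).symm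
        _ ≤ ∑ v ∈ CV, bndV v := Finset.sum_le_sum_of_subset hsub

end AuxLemmas

theorem stmt10 [Fintype V] (G : SimpleGraph V) (d : ℕ) (hd : 3 ≤ d)
    (hreg : G.IsRegularOfDegree d) (U : Set V) :
    clusterCount (G.induce Uᶜ) ≤ U.ncard := by
  haveI : Fintype (G.induce Uᶜ).ConnectedComponent := Fintype.ofFinite _
  set clusters : Finset (G.induce Uᶜ).ConnectedComponent :=
    Finset.univ.filter (fun c => IsTriangleCluster ((G.induce Uᶜ).induce c.supp))
    with hclusters
  have hcc : clusterCount (G.induce Uᶜ) = clusters.card := by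
    rw [clusterCount, Nat.card_eq_fintype_card, hclusters]
    exact Fintype.card_subtype _
  set fib : (G.induce Uᶜ).ConnectedComponent → Finset (V × V) := fun c =>
    Finset.univ.filter (fun p : V × V => G.Adj p.1 p.2 ∧ p.2 ∈ U ∧
      ∃ h : p.1 ∈ Uᶜ, (G.induce Uᶜ).connectedComponentMk ⟨p.1, h⟩ = c) with hfib
  have h1 : d * clusters.card ≤ ∑ c ∈ clusters, (fib c).card := by
    calc d * clusters.card = ∑ _c ∈ clusters, d := by
          rw [Finset.sum_const, smul_eq_mul, mul_comm]
      _ ≤ ∑ c ∈ clusters, (fib c).card := by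
          refine Finset.sum_le_sum (fun c hc => ?_)
          simp only [hclusters, Finset.mem_filter, Finset.mem_univ, true_and] at hc
          simp only [hfib]
          exact key_cluster G hd hreg U c hc
  have hdisj : ∀ c₁ ∈ clusters, ∀ c₂ ∈ clusters, c₁ ≠ c₂ → Disjoint (fib c₁) (fib c₂) := by
    intro c₁ _ c₂ _ hne
    rw [Finset.disjoint_left]
    intro p hp1 hp2
    simp only [hfib, Finset.mem_filter, Finset.mem_univ, true_and] at hp1 hp2
    obtain ⟨-, -, h, hc1⟩ := hp1
    obtain ⟨-, -, h', hc2⟩ := hp2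
    exact hne (by rw [← hc1, ← hc2])
  have h2 : ∑ c ∈ clusters, (fib c).card = (clusters.biUnion fib).card :=
    (Finset.card_biUnion hdisj).symm
  have h3 : clusters.biUnion fib ⊆
      Finset.univ.filter (fun p : V × V => G.Adj p.1 p.2 ∧ p.2 ∈ U) := by
    intro p hp
    rw [Finset.mem_biUnion] at hp
    obtain ⟨c, -, hp⟩ := hp
    simp only [hfib, Finset.mem_filter, Finset.mem_univ, true_and] at hp ⊢
    exact ⟨hp.1, hp.2.1⟩
  have h4 : (Finset.univ.filter (fun p : V × V => G.Adj p.1 p.2 ∧ p.2 ∈ U)).card ≤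
      U.ncard * d := by
    rw [Finset.card_eq_sum_card_fiberwise (f := Prod.snd) (t := U.toFinset) ?side]
    case side =>
      intro p hp
      simp only [Finset.mem_coe, Finset.mem_filter, Finset.mem_univ, true_and] at hp
      exact Set.mem_toFinset.mpr hp.2
    have hfibu : ∀ u ∈ U.toFinset,
        ((Finset.univ.filter (fun p : V × V => G.Adj p.1 p.2 ∧ p.2 ∈ U)).filter
          (fun p => p.2 = u)).card ≤ d := by
      intro u _
      refine le_trans (Finset.card_le_card_of_injOn Prod.fst ?_ ?_) (le_of_eq (hreg u))
      · intro p hp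
        simp only [Finset.mem_coe, Finset.mem_filter, Finset.mem_univ, true_and] at hp
        obtain ⟨⟨hadj, -⟩, h2⟩ := hp
        rw [Finset.mem_coe, SimpleGraph.mem_neighborFinset]
        exact (h2 ▸ hadj).symm
      · intro p hp q hq hpq
        simp only [Finset.coe_filter, Set.mem_setOf_eq] at hp hq
        exact Prod.ext hpq (hp.2.trans hq.2.symm)
    calc ∑ u ∈ U.toFinset,
        ((Finset.univ.filter (fun p : V × V => G.Adj p.1 p.2 ∧ p.2 ∈ U)).filter
          (fun p => p.2 = u)).card ≤ ∑ _u ∈ U.toFinset, d := Finset.sum_le_sum hfibu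
      _ = U.toFinset.card * d := by rw [Finset.sum_const, smul_eq_mul]
      _ = U.ncard * d := by rw [Set.ncard_eq_toFinset_card']
  have hfinal : d * clusters.card ≤ U.ncard * d :=
    le_trans h1 (le_trans (le_of_eq h2) (le_trans (Finset.card_le_card h3) h4))
  rw [hcc]
  have hdpos : 0 < d := by omega
  rw [mul_comm] at hfinal
  exact Nat.le_of_mul_le_mul_right hfinal hdpos

end

end TF
end

section
/- Every d-regular finite simple undirected graph with d ≥ 1 has a perfect 2-matching. -/
open scoped Classical

namespace TF

noncomputable section

variable {V : Type*} {W : Type*}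

theorem stmt11 [Fintype V] (G : SimpleGraph V) (d : ℕ) (hd : 1 ≤ d)
    (hreg : G.IsRegularOfDegree d) :
    ∃ x, IsTwoMatching G x ∧ size x = Fintype.card V := by
  classical
  -- Hall's condition for the neighbor set system
  have hall : ∀ S : Finset V, S.card ≤ (S.biUnion fun v => G.neighborFinset v).card := by
    intro S
    set T := S.biUnion fun v => G.neighborFinset v with hT
    have hNv : ∀ v ∈ S, G.neighborFinset v = T.filter (fun w => G.Adj v w) := by
      intro v hv
      ext w
      simp only [Finset.mem_filter, SimpleGraph.mem_neighborFinset, hT, Finset.mem_biUnion]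
      exact ⟨fun h => ⟨⟨v, hv, by simpa using h⟩, h⟩, fun h => h.2⟩
    have key : d * S.card ≤ d * T.card := by
      calc d * S.card = ∑ v ∈ S, (G.neighborFinset v).card := by
            rw [Finset.sum_congr rfl (fun v _ => by
              rw [SimpleGraph.card_neighborFinset_eq_degree, hreg v])]
            rw [Finset.sum_const, smul_eq_mul, mul_comm]
        _ = ∑ v ∈ S, ∑ w ∈ T, (if G.Adj v w then 1 else 0) := by
            refine Finset.sum_congr rfl fun v hv => ?_
            rw [hNv v hv, Finset.card_filter]
        _ = ∑ w ∈ T, ∑ v ∈ S, (if G.Adj v w then 1 else 0) := Finset.sum_comm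
        _ = ∑ w ∈ T, (S.filter (fun v => G.Adj v w)).card := by
            refine Finset.sum_congr rfl fun w _ => ?_
            rw [Finset.card_filter]
        _ ≤ ∑ w ∈ T, d := by
            refine Finset.sum_le_sum fun w _ => ?_
            have : S.filter (fun v => G.Adj v w) ⊆ G.neighborFinset w := by
              intro v hv
              simp only [Finset.mem_filter] at hv
              simpa [SimpleGraph.mem_neighborFinset] using hv.2.symm
            calc (S.filter (fun v => G.Adj v w)).card ≤ (G.neighborFinset w).card :=
                  Finset.card_le_card this
              _ = d := hreg w
        _ = d * T.card := by rw [Finset.sum_const, smul_eq_mul, mul_comm]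
    exact Nat.le_of_mul_le_mul_left key (by omega)
  obtain ⟨f, hfinj, hfadj⟩ :=
    (Finset.all_card_le_biUnion_card_iff_exists_injective
      (fun v => G.neighborFinset v)).mp hall
  have hadj : ∀ v, G.Adj v (f v) := fun v => by
    simpa [SimpleGraph.mem_neighborFinset] using hfadj v
  set x : Sym2 V → ℕ := fun e => (Finset.univ.filter fun u => s(u, f u) = e).card with hx
  refine ⟨x, ⟨?_, ?_, ?_⟩, ?_⟩
  · -- supported on edges
    intro e he
    rw [hx] at he
    obtain ⟨u, hu⟩ := Finset.card_pos.mp (Nat.pos_of_ne_zero he)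
    simp only [Finset.mem_filter] at hu
    rw [← hu.2]
    exact (hadj u)
  · -- values ≤ 2
    intro e
    induction e using Sym2.inductionOn with
    | hf a b =>
      have hsub : (Finset.univ.filter fun u => s(u, f u) = s(a, b)) ⊆ {a, b} := by
        intro u hu
        simp only [Finset.mem_filter, Sym2.eq, Sym2.rel_iff', Prod.mk.injEq,
          Prod.swap_prod_mk] at hu
        rcases hu.2 with ⟨h1, _⟩ | ⟨h1, _⟩
        · simp [h1]
        · simp [h1]
      calc x s(a, b) ≤ ({a, b} : Finset V).card := Finset.card_le_card hsub
        _ ≤ 2 := Finset.card_insert_le _ _ |>.trans (by simp)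
  · -- degree condition: sum over incident edges = 2
    intro v
    have hcount : ∑ e ∈ Finset.univ.filter (fun e : Sym2 V => v ∈ e), x e
        = (Finset.univ.filter fun u => v ∈ s(u, f u)).card := by
      rw [hx]
      rw [Finset.card_eq_sum_card_fiberwise
        (f := fun u => s(u, f u)) (t := Finset.univ.filter (fun e : Sym2 V => v ∈ e))
        (fun u hu => by simpa using (Finset.mem_filter.mp hu).2)]
      refine Finset.sum_congr rfl fun e he => ?_
      have heq : Finset.univ.filter (fun u => s(u, f u) = e)
          = (Finset.univ.filter fun u => v ∈ s(u, f u)).filter (fun u => s(u, f u) = e) := by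
        ext u
        simp only [Finset.mem_filter, Finset.mem_univ, true_and]
        constructor
        · intro h
          exact ⟨by rw [h]; exact (Finset.mem_filter.mp he).2, h⟩
        · exact fun h => h.2
      simpa using congrArg Finset.card heq
    rw [hcount]
    -- the set is exactly {v, f⁻¹ v}
    have hsurj : Function.Surjective f := Finite.surjective_of_injective hfinj
    obtain ⟨w, hw⟩ := hsurj v
    have hwv : w ≠ v := fun h => (hadj v).ne' (h ▸ hw)
    have hset : (Finset.univ.filter fun u => v ∈ s(u, f u)) = {v, w} := by
      ext u
      simp only [Finset.mem_filter, Finset.mem_univ, true_and, Sym2.mem_iff,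
        Finset.mem_insert, Finset.mem_singleton]
      constructor
      · rintro (h | h)
        · left; exact h.symm
        · right; exact (hfinj (hw.trans h)).symm
      · rintro (h | h)
        · left; exact h.symm
        · right; rw [h]; exact hw.symm
    rw [hset, Finset.card_insert_of_notMem (by simpa using hwv.symm), Finset.card_singleton]
  · -- size equals card V
    rw [size, hx]
    have h := Finset.card_eq_sum_card_fiberwise (f := fun u => s(u, f u))
      (s := (Finset.univ : Finset V)) (t := (Finset.univ : Finset (Sym2 V)))
      (fun u _ => Finset.mem_univ _)
    rw [Finset.card_univ] at h
    simpa using h.symm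


end

end TF
end

section
/- For every 2-matching x in a finite simple undirected graph G there exists a basic 2-matching x' in G with size at least the size of x; here a 2-matching is basic if the set of edges e with x'(e) = 1 partitions into node-disjoint circuits of odd length. -/
open scoped Classical

namespace TF

noncomputable section

variable {V : Type*} {W : Type*}

section Aux
variable {G : SimpleGraph V}


def dsum [Fintype V] (y : Sym2 V → ℕ) (v : V) : ℕ :=
  ∑ e ∈ Finset.univ.filter (fun e : Sym2 V => v ∈ e), y e

theorem dsum_update [Fintype V] (y : Sym2 V → ℕ) (e : Sym2 V) (k : ℕ) (z : V) :
    dsum (Function.update y e k) z = if z ∈ e then dsum y z - y e + k else dsum y z := by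
  classical
  unfold dsum
  split_ifs with hz
  · have he : e ∈ Finset.univ.filter (fun e : Sym2 V => z ∈ e) := by simp [hz]
    rw [Finset.sum_update_of_mem he, ← Finset.sum_erase_add _ y he, Finset.sdiff_singleton_eq_erase]
    omega
  · apply Finset.sum_congr rfl
    intro x hx
    have : x ≠ e := by rintro rfl; simp at hx; exact hz hx
    simp [Function.update_of_ne this]

theorem size_update [Fintype V] (y : Sym2 V → ℕ) (e : Sym2 V) (k : ℕ) :
    (∑ x : Sym2 V, Function.update y e k x) = (∑ x : Sym2 V, y x) - y e + k := by
  classical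
  rw [Finset.sum_update_of_mem (Finset.mem_univ e),
    ← Finset.sum_erase_add _ y (Finset.mem_univ e), Finset.sdiff_singleton_eq_erase]
  omega

theorem edge_le_dsum [Fintype V] (y : Sym2 V → ℕ) {e : Sym2 V} {z : V} (hz : z ∈ e) :
    y e ≤ dsum y z :=
  Finset.single_le_sum (fun _ _ => Nat.zero_le _) (by simp [hz])

theorem pair_le_dsum [Fintype V] (y : Sym2 V → ℕ) {e₁ e₂ : Sym2 V} {z : V} (h : e₁ ≠ e₂)
    (h1 : z ∈ e₁) (h2 : z ∈ e₂) : y e₁ + y e₂ ≤ dsum y z := by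
  classical
  have : ∑ e ∈ ({e₁, e₂} : Finset (Sym2 V)), y e ≤ dsum y z := by
    apply Finset.sum_le_sum_of_subset
    intro x hx
    simp only [Finset.mem_insert, Finset.mem_singleton] at hx
    rcases hx with rfl | rfl <;> simp [h1, h2]
  rwa [Finset.sum_pair h] at this

theorem triple_le_dsum [Fintype V] (y : Sym2 V → ℕ) {e₁ e₂ e₃ : Sym2 V} {z : V}
    (h12 : e₁ ≠ e₂) (h13 : e₁ ≠ e₃) (h23 : e₂ ≠ e₃)
    (h1 : z ∈ e₁) (h2 : z ∈ e₂) (h3 : z ∈ e₃) : y e₁ + y e₂ + y e₃ ≤ dsum y z := by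
  classical
  have : ∑ e ∈ ({e₁, e₂, e₃} : Finset (Sym2 V)), y e ≤ dsum y z := by
    apply Finset.sum_le_sum_of_subset
    intro x hx
    simp only [Finset.mem_insert, Finset.mem_singleton] at hx
    rcases hx with rfl | rfl | rfl <;> simp [h1, h2, h3]
  rw [Finset.sum_insert (by simp [h12, h13]), Finset.sum_pair h23] at this
  omega

theorem dsum_ne_zero [Fintype V] {y : Sym2 V → ℕ} {z : V} (h : dsum y z ≠ 0) :
    ∃ e, z ∈ e ∧ y e ≠ 0 := by
  classical
  obtain ⟨e, he, hne⟩ := Finset.exists_ne_zero_of_sum_ne_zero h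
  exact ⟨e, by simpa using he, hne⟩

theorem dsum_mono_support [Fintype V] {y y' : Sym2 V → ℕ}
    (h : ∀ e, y' e ≠ 0 → y e ≠ 0) {z : V} (hz : dsum y' z ≠ 0) : dsum y z ≠ 0 := by
  obtain ⟨e, hze, hne⟩ := dsum_ne_zero hz
  have := edge_le_dsum y hze
  have := h e hne
  omega


theorem mem_support_of_mem_edge {u v x : V} {p : G.Walk u v} {e : Sym2 V}
    (he : e ∈ p.edges) (hx : x ∈ e) : x ∈ p.support := by
  induction e using Sym2.ind with
  | _ a b =>
    rcases Sym2.mem_iff.mp hx with rfl | rfl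
    · exact p.fst_mem_support_of_mem_edges he
    · exact p.snd_mem_support_of_mem_edges he

theorem mem_edge_of_mem_support {u v x : V} (p : G.Walk u v)
    (hx : x ∈ p.support) (hu : x ≠ u) : ∃ e ∈ p.edges, x ∈ e := by
  induction p with
  | nil => simp at hx; exact absurd hx hu
  | cons h q ih =>
    rename_i a b c
    rw [SimpleGraph.Walk.support_cons, List.mem_cons] at hx
    rcases hx with rfl | hx
    · exact absurd rfl hu
    · by_cases hb : x = b
      · subst hb
        exact ⟨s(a, x), by simp, by simp⟩
      · obtain ⟨e, he, hxe⟩ := ih hx hb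
        exact ⟨e, by simp [he], hxe⟩

theorem start_not_mem_edges {u w v : V} {h : G.Adj u w} {q : G.Walk w v}
    (hp : (SimpleGraph.Walk.cons h q).IsPath) {e : Sym2 V} (he : e ∈ q.edges) : u ∉ e := by
  intro hu
  exact ((SimpleGraph.Walk.cons_isPath_iff _ _).mp hp).2 (mem_support_of_mem_edge he hu)

theorem two_edges_of_internal {u v x : V} {p : G.Walk u v} (hp : p.IsPath)
    (hx : x ∈ p.support) (hu : x ≠ u) (hv : x ≠ v) :
    ∃ e₁ e₂, e₁ ≠ e₂ ∧ e₁ ∈ p.edges ∧ e₂ ∈ p.edges ∧ x ∈ e₁ ∧ x ∈ e₂ := by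
  classical
  have hev : Even (p.edges.countP fun e => x ∈ e) := by
    rw [hp.isTrail.even_countP_edges_iff]
    exact fun _ => ⟨hu, hv⟩
  obtain ⟨e, he, hxe⟩ := mem_edge_of_mem_support p hx hu
  have h1 : 1 ≤ p.edges.countP fun e => x ∈ e := by
    rw [List.countP_eq_length_filter]
    have : e ∈ p.edges.filter (fun e => decide (x ∈ e)) := by
      simp [List.mem_filter, he, hxe]
    exact List.length_pos_iff.mpr (fun h => by simp [h] at this)
  have h2 : 2 ≤ p.edges.countP fun e => x ∈ e := by
    rcases hev with ⟨k, hk⟩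
    omega
  rw [List.countP_eq_length_filter] at h2
  set l := p.edges.filter (fun e => decide (x ∈ e)) with hl
  have hnd : l.Nodup := hp.isTrail.edges_nodup.filter _
  have key : ∀ m : List (Sym2 V), m.Nodup → 2 ≤ m.length → ∃ e₁ ∈ m, ∃ e₂ ∈ m, e₁ ≠ e₂ := by
    intro m hm hlen
    match m, hm, hlen with
    | e₁ :: e₂ :: rest, hm, _ =>
      refine ⟨e₁, by simp, e₂, by simp, ?_⟩
      intro hcon; subst hcon; simp at hm
  obtain ⟨e₁, h₁, e₂, h₂, hne⟩ := key l hnd h2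
  rw [hl, List.mem_filter] at h₁ h₂
  exact ⟨e₁, e₂, hne, h₁.1, h₂.1, by simpa using h₁.2, by simpa using h₂.2⟩

theorem two_edges_of_cycle {z x : V} {c : G.Walk z z} (hc : c.IsCycle)
    (hx : x ∈ c.support) :
    ∃ e₁ e₂, e₁ ≠ e₂ ∧ e₁ ∈ c.edges ∧ e₂ ∈ c.edges ∧ x ∈ e₁ ∧ x ∈ e₂ := by
  classical
  have hc' := hc.rotate hx
  set c' := c.rotate x hx with hc'def
  have hmem : ∀ e, e ∈ c'.edges ↔ e ∈ c.edges := fun e =>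
    (c.rotate_edges x hx).mem_iff
  suffices h : ∃ e₁ e₂, e₁ ≠ e₂ ∧ e₁ ∈ c'.edges ∧ e₂ ∈ c'.edges ∧ x ∈ e₁ ∧ x ∈ e₂ by
    obtain ⟨e₁, e₂, hne, h1, h2, hx1, hx2⟩ := h
    exact ⟨e₁, e₂, hne, (hmem e₁).mp h1, (hmem e₂).mp h2, hx1, hx2⟩
  clear_value c'
  clear hmem hc hx hc'def
  match c', hc' with
  | SimpleGraph.Walk.cons (v := u) h q, hc' =>
    have hq : q.IsPath ∧ s(x, u) ∉ q.edges := (SimpleGraph.Walk.cons_isCycle_iff q h).mp hc'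
    have hxq : x ∈ q.support := q.end_mem_support
    have hxu : x ≠ u := (G.ne_of_adj h)
    obtain ⟨e, he, hxe⟩ := mem_edge_of_mem_support q hxq hxu
    refine ⟨s(x, u), e, ?_, by simp, by simp [he], by simp, hxe⟩
    intro hcon
    rw [hcon] at hq
    exact hq.2 he

theorem mem_edge_of_mem_cycle_support {z x : V} {c : G.Walk z z} (hc : c.IsCycle)
    (hx : x ∈ c.support) : ∃ e ∈ c.edges, x ∈ e := by
  obtain ⟨e₁, _, _, h1, _, hx1, _⟩ := two_edges_of_cycle hc hx
  exact ⟨e₁, h1, hx1⟩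
def bval : Bool → ℕ | true => 2 | false => 0

theorem bval_le : ∀ b, bval b ≤ 2 := by decide

theorem bval_add : ∀ b, bval b + bval (!b) = 2 := by decide

def altAssign : ∀ {u v : V}, G.Walk u v → Bool → Sym2 V → ℕ
  | _, _, SimpleGraph.Walk.nil, _ => fun _ => 0
  | _, _, SimpleGraph.Walk.cons (u := a) (v := c) _ q, x =>
      Function.update (altAssign q (!x)) s(a, c) (bval x)

theorem altAssign_nil {u : V} (b : Bool) :
    altAssign (SimpleGraph.Walk.nil : G.Walk u u) b = fun _ => 0 := rfl

theorem altAssign_cons {a c w : V} (h : G.Adj a c) (q : G.Walk c w) (b : Bool) :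
    altAssign (SimpleGraph.Walk.cons h q) b =
      Function.update (altAssign q (!b)) s(a, c) (bval b) := rfl

theorem dsum_zero [Fintype V] (w : V) : dsum (fun _ : Sym2 V => 0) w = 0 := by
  simp [dsum]

theorem altAssign_eq_zero_or {u v : V} (p : G.Walk u v) (b : Bool) (e : Sym2 V) :
    altAssign p b e = 0 ∨ (e ∈ p.edges ∧ altAssign p b e = 2) := by
  induction p generalizing b with
  | nil => left; rw [altAssign_nil]
  | cons h q ih =>
    rename_i a c w
    rw [altAssign_cons]
    by_cases he : e = s(a, c)
    · subst he
      rw [Function.update_self]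
      cases b
      · left; rfl
      · right; exact ⟨by simp, rfl⟩
    · rw [Function.update_of_ne he]
      rcases ih (!b) with h0 | ⟨hm, h2⟩
      · left; exact h0
      · right; exact ⟨by simp [hm], h2⟩

theorem altAssign_support {u v : V} {p : G.Walk u v} {b : Bool} {e : Sym2 V}
    (h : altAssign p b e ≠ 0) : e ∈ p.edges ∧ altAssign p b e = 2 := by
  rcases altAssign_eq_zero_or p b e with h0 | h2
  · exact absurd h0 h
  · exact h2

theorem altAssign_dsum [Fintype V] {u v : V} {p : G.Walk u v} (hp : p.IsPath) (b : Bool) :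
    dsum (altAssign p b) u ≤ bval b ∧ ∀ w, dsum (altAssign p b) w ≤ 2 := by
  induction p generalizing b with
  | nil =>
    rw [altAssign_nil]
    exact ⟨by rw [dsum_zero]; omega, fun w => by rw [dsum_zero]; omega⟩
  | cons h q ih =>
    rename_i a c w
    have hq : q.IsPath := hp.of_cons
    have hnotin : a ∉ q.support := ((SimpleGraph.Walk.cons_isPath_iff _ _).mp hp).2
    obtain ⟨ih1, ih2⟩ := ih hq (!b)
    have h0 : altAssign q (!b) s(a, c) = 0 := by
      by_contra hne
      obtain ⟨hmem, _⟩ := altAssign_support hne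
      exact hnotin (mem_support_of_mem_edge hmem (by simp))
    have key : ∀ z, dsum (altAssign (SimpleGraph.Walk.cons h q) b) z =
        if z ∈ s(a, c) then dsum (altAssign q (!b)) z + bval b
        else dsum (altAssign q (!b)) z := by
      intro z
      rw [altAssign_cons, dsum_update, h0]
      simp
    have ha : dsum (altAssign q (!b)) a = 0 := by
      by_contra hne
      obtain ⟨e, hze, hene⟩ := dsum_ne_zero hne
      obtain ⟨hmem, _⟩ := altAssign_support hene
      exact hnotin (mem_support_of_mem_edge hmem hze)
    constructor
    · rw [key a, if_pos (by simp), ha]; omega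
    · intro z
      rw [key z]
      split_ifs with hz
      · rcases Sym2.mem_iff.mp hz with rfl | rfl
        · rw [ha]; simpa using bval_le b
        · calc dsum (altAssign q (!b)) z + bval b ≤ bval (!b) + bval b :=
                Nat.add_le_add_right ih1 _
            _ = 2 := by rw [Nat.add_comm]; exact bval_add b
      · exact ih2 z

theorem altAssign_size [Fintype V] {u v : V} {p : G.Walk u v} (hp : p.IsPath) (b : Bool) :
    ∑ e : Sym2 V, altAssign p b e = 2 * ((p.length + (if b then 1 else 0)) / 2) := by
  induction p generalizing b with
  | nil =>
    rw [altAssign_nil]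
    cases b <;> simp
  | cons h q ih =>
    rename_i a c w
    have hq : q.IsPath := hp.of_cons
    have hnotin : a ∉ q.support := ((SimpleGraph.Walk.cons_isPath_iff _ _).mp hp).2
    have h0 : altAssign q (!b) s(a, c) = 0 := by
      by_contra hne
      obtain ⟨hmem, _⟩ := altAssign_support hne
      exact hnotin (mem_support_of_mem_edge hmem (by simp))
    rw [altAssign_cons, size_update, h0, ih hq (!b), SimpleGraph.Walk.length_cons]
    cases b <;> simp [bval] <;> omega
theorem ones_def [Fintype V] (y : Sym2 V → ℕ) (e : Sym2 V) :
    e ∈ Finset.univ.filter (fun e : Sym2 V => y e = 1) ↔ y e = 1 := by simp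

theorem card_ge_of_path [Fintype V] {y : Sym2 V → ℕ} {u v : V} {p : G.Walk u v}
    (hp : p.IsPath) (hall : ∀ e ∈ p.edges, y e = 1) {e' : Sym2 V} (he' : y e' = 1)
    (hne : e' ∉ p.edges) :
    p.length + 1 ≤ (Finset.univ.filter (fun e : Sym2 V => y e = 1)).card := by
  classical
  have hsub : insert e' p.edges.toFinset ⊆ Finset.univ.filter (fun e : Sym2 V => y e = 1) := by
    intro x hx
    rw [Finset.mem_insert] at hx
    rcases hx with rfl | hx
    · simp [he']
    · rw [List.mem_toFinset] at hx
      simp [hall x hx]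
  calc p.length + 1 = p.edges.toFinset.card + 1 := by
        rw [List.toFinset_card_of_nodup hp.isTrail.edges_nodup, SimpleGraph.Walk.length_edges]
    _ = (insert e' p.edges.toFinset).card := by
        rw [Finset.card_insert_of_notMem (by simpa using hne)]
    _ ≤ _ := Finset.card_le_card hsub

theorem exists_cycle_aux [Fintype V] {y : Sym2 V → ℕ}
    (hy1 : ∀ e, y e ≠ 0 → e ∈ G.edgeSet) (hy2 : ∀ v : V, dsum y v ≤ 2)
    (hdeg : ∀ (v : V) (e : Sym2 V), v ∈ e → y e = 1 → ∃ e', e' ≠ e ∧ v ∈ e' ∧ y e' = 1)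
    (a : V) :
    ∀ (n : ℕ) (w : V) (p : G.Walk w a), p.IsPath → 0 < p.length →
      (∀ e ∈ p.edges, y e = 1) →
      (Finset.univ.filter (fun e : Sym2 V => y e = 1)).card ≤ p.length + n →
      ∃ (z : V) (c : G.Walk z z), c.IsCycle ∧ ∀ e ∈ c.edges, y e = 1 := by
  intro n
  induction n with
  | zero =>
    intro w p hp hlen hall hcard
    match p, hp, hlen, hall, hcard with
    | SimpleGraph.Walk.cons (v := w₂) h q, hp, hlen, hall, hcard =>
      have hfe : y s(w, w₂) = 1 := hall _ (by simp)
      obtain ⟨e', hne, hwe', he'⟩ := hdeg w s(w, w₂) (by simp) hfe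
      have he'nm : e' ∉ (SimpleGraph.Walk.cons h q).edges := by
        simp only [SimpleGraph.Walk.edges_cons, List.mem_cons]
        rintro (rfl | hmem)
        · exact hne rfl
        · exact start_not_mem_edges hp hmem hwe'
      have := card_ge_of_path hp hall he' he'nm
      omega
  | succ n ih =>
    intro w p hp hlen hall hcard
    match p, hp, hlen, hall, hcard with
    | SimpleGraph.Walk.cons (v := w₂) h q, hp, hlen, hall, hcard =>
      have hfe : y s(w, w₂) = 1 := hall _ (by simp)
      obtain ⟨e', hne, hwe', he'⟩ := hdeg w s(w, w₂) (by simp) hfe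
      obtain ⟨u, rfl⟩ := Sym2.mem_iff_exists.mp hwe'
      have hadj : G.Adj w u := (SimpleGraph.mem_edgeSet G).mp (hy1 _ (by omega))
      have he'nm : s(w, u) ∉ (SimpleGraph.Walk.cons h q).edges := by
        simp only [SimpleGraph.Walk.edges_cons, List.mem_cons]
        rintro (heq | hmem)
        · exact hne heq
        · exact start_not_mem_edges hp hmem (by simp)
      by_cases hua : u = a
      · subst hua
        refine ⟨u, SimpleGraph.Walk.cons hadj.symm (SimpleGraph.Walk.cons h q), ?_, ?_⟩
        · rw [SimpleGraph.Walk.cons_isCycle_iff]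
          refine ⟨hp, ?_⟩
          rwa [Sym2.eq_swap]
        · intro e he
          rw [SimpleGraph.Walk.edges_cons, List.mem_cons] at he
          rcases he with rfl | he
          · rwa [Sym2.eq_swap]
          · exact hall e he
      · by_cases hus : u ∈ (SimpleGraph.Walk.cons h q).support
        · exfalso
          have huw : u ≠ w := fun hc => G.loopless.irrefl w (hc ▸ hadj)
          obtain ⟨e₁, e₂, h12, hm1, hm2, hu1, hu2⟩ :=
            two_edges_of_internal hp hus huw hua
          have hne1 : e₁ ≠ s(w, u) := fun hc => he'nm (hc ▸ hm1)
          have hne2 : e₂ ≠ s(w, u) := fun hc => he'nm (hc ▸ hm2)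
          have h3 := triple_le_dsum y h12 hne1 hne2 hu1 hu2 (by simp)
          have h4 := hy2 u
          rw [hall e₁ hm1, hall e₂ hm2, he'] at h3
          omega
        · have hp' : (SimpleGraph.Walk.cons hadj.symm (SimpleGraph.Walk.cons h q)).IsPath := by
            rw [SimpleGraph.Walk.cons_isPath_iff]
            exact ⟨hp, hus⟩
          apply ih u (SimpleGraph.Walk.cons hadj.symm (SimpleGraph.Walk.cons h q)) hp'
            (by simp) ?_ ?_
          · intro e he
            rw [SimpleGraph.Walk.edges_cons, List.mem_cons] at he
            rcases he with rfl | he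
            · rwa [Sym2.eq_swap]
            · exact hall e he
          · rw [SimpleGraph.Walk.length_cons]
            omega

theorem exists_cycle [Fintype V] {y : Sym2 V → ℕ}
    (hy1 : ∀ e, y e ≠ 0 → e ∈ G.edgeSet) (hy2 : ∀ v : V, dsum y v ≤ 2)
    (hdeg : ∀ (v : V) (e : Sym2 V), v ∈ e → y e = 1 → ∃ e', e' ≠ e ∧ v ∈ e' ∧ y e' = 1)
    {a b : V} (hab : y s(a, b) = 1) :
    ∃ (z : V) (c : G.Walk z z), c.IsCycle ∧ ∀ e ∈ c.edges, y e = 1 := by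
  have hadj : G.Adj b a := by
    have := (SimpleGraph.mem_edgeSet G).mp (hy1 s(a, b) (by omega))
    exact this.symm
  apply exists_cycle_aux hy1 hy2 hdeg a ((Finset.univ.filter (fun e : Sym2 V => y e = 1)).card)
    b (SimpleGraph.Walk.cons hadj SimpleGraph.Walk.nil)
  · simp [SimpleGraph.Walk.isPath_def, hadj.ne]
  · simp
  · intro e he
    simp only [SimpleGraph.Walk.edges_cons, SimpleGraph.Walk.edges_nil, List.mem_cons,
      List.not_mem_nil, or_false] at he
    subst he
    rwa [Sym2.eq_swap]
  · rw [SimpleGraph.Walk.length_cons, SimpleGraph.Walk.length_nil]; omega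
theorem filter_graft_eq [Fintype V] (l : List (Sym2 V)) (v : V) :
    (Finset.univ.filter (fun e : Sym2 V => v ∈ e)).filter (fun e => e ∈ l) =
      l.toFinset.filter (fun e => v ∈ e) := by
  ext e
  simp [and_comm]

theorem dsum_graft [Fintype V] (y g : Sym2 V → ℕ) (l : List (Sym2 V)) (v : V) :
    dsum (fun e => if e ∈ l then g e else y e) v =
      (∑ e ∈ l.toFinset.filter (fun e => v ∈ e), g e) +
      (∑ e ∈ (Finset.univ.filter (fun e : Sym2 V => v ∈ e)).filter (fun e => e ∉ l), y e) := by
  classical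
  unfold dsum
  rw [← Finset.sum_filter_add_sum_filter_not
    (Finset.univ.filter (fun e : Sym2 V => v ∈ e)) (fun e => e ∈ l)]
  congr 1
  · rw [← filter_graft_eq l v]
    apply Finset.sum_congr rfl
    intro x hx
    rw [Finset.mem_filter] at hx
    exact if_pos hx.2
  · apply Finset.sum_congr rfl
    intro x hx
    rw [Finset.mem_filter] at hx
    exact if_neg hx.2

theorem dsum_split [Fintype V] (y : Sym2 V → ℕ) (l : List (Sym2 V)) (v : V) :
    dsum y v =
      (∑ e ∈ l.toFinset.filter (fun e => v ∈ e), y e) +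
      (∑ e ∈ (Finset.univ.filter (fun e : Sym2 V => v ∈ e)).filter (fun e => e ∉ l), y e) := by
  have := dsum_graft y y l v
  simpa using this

theorem size_graft [Fintype V] (y g : Sym2 V → ℕ) (l : List (Sym2 V)) :
    (∑ e : Sym2 V, if e ∈ l then g e else y e) =
      (∑ e ∈ l.toFinset, g e) + (∑ e ∈ Finset.univ.filter (fun e : Sym2 V => e ∉ l), y e) := by
  classical
  rw [← Finset.sum_filter_add_sum_filter_not
    (Finset.univ : Finset (Sym2 V)) (fun e => e ∈ l)]
  congr 1
  · have : (Finset.univ : Finset (Sym2 V)).filter (fun e => e ∈ l) = l.toFinset := by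
      ext e; simp
    rw [this]
    apply Finset.sum_congr rfl
    intro x hx
    rw [List.mem_toFinset] at hx
    exact if_pos hx
  · apply Finset.sum_congr rfl
    intro x hx
    rw [Finset.mem_filter] at hx
    exact if_neg hx.2

theorem size_split [Fintype V] (y : Sym2 V → ℕ) (l : List (Sym2 V)) :
    (∑ e : Sym2 V, y e) =
      (∑ e ∈ l.toFinset, y e) + (∑ e ∈ Finset.univ.filter (fun e : Sym2 V => e ∉ l), y e) := by
  have := size_graft y y l
  simpa using this
theorem dsum_single [Fintype V] {y : Sym2 V → ℕ} {v : V} {e : Sym2 V} (he : v ∈ e)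
    (h : ∀ e', v ∈ e' → e' ≠ e → y e' = 0) : dsum y v = y e := by
  unfold dsum
  apply Finset.sum_eq_single_of_mem e (by simp [he])
  intro x hx hne
  exact h x (by simpa using hx) hne

theorem isBasic_of_no_ones {G : SimpleGraph V} {y : Sym2 V → ℕ} (h : ∀ e, y e ≠ 1) :
    IsBasic G y := by
  refine ⟨∅, by simp, by simp, ?_⟩
  ext e
  simp [h e]

theorem cycle_facts [Fintype V] {y : Sym2 V → ℕ} (hy2 : ∀ v : V, dsum y v ≤ 2) {z : V}
    {c : G.Walk z z} (hcyc : c.IsCycle) (hce : ∀ e ∈ c.edges, y e = 1) :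
    (∀ v ∈ c.support, ∀ e, v ∈ e → e ∉ c.edges → y e = 0) ∧
    (∀ v ∈ c.support, (c.edges.toFinset.filter (fun e => v ∈ e)).card = 2) := by
  classical
  constructor
  · intro v hv e hve hne
    obtain ⟨e₁, e₂, h12, hm1, hm2, hv1, hv2⟩ := two_edges_of_cycle hcyc hv
    have h13 : e₁ ≠ e := fun hc => hne (hc ▸ hm1)
    have h23 : e₂ ≠ e := fun hc => hne (hc ▸ hm2)
    have ht := triple_le_dsum y h12 h13 h23 hv1 hv2 hve
    have hb := hy2 v
    rw [hce e₁ hm1, hce e₂ hm2] at ht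
    omega
  · intro v hv
    obtain ⟨e₁, e₂, h12, hm1, hm2, hv1, hv2⟩ := two_edges_of_cycle hcyc hv
    have hle : (c.edges.toFinset.filter (fun e => v ∈ e)).card ≤ 2 := by
      have hsub : c.edges.toFinset.filter (fun e => v ∈ e) ⊆
          Finset.univ.filter (fun e : Sym2 V => v ∈ e) := by
        intro x hx
        rw [Finset.mem_filter] at hx ⊢
        exact ⟨Finset.mem_univ x, hx.2⟩
      calc (c.edges.toFinset.filter (fun e => v ∈ e)).card
          = ∑ e ∈ c.edges.toFinset.filter (fun e => v ∈ e), 1 := by simp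
        _ = ∑ e ∈ c.edges.toFinset.filter (fun e => v ∈ e), y e := by
            apply Finset.sum_congr rfl
            intro x hx
            rw [Finset.mem_filter, List.mem_toFinset] at hx
            rw [hce x hx.1]
        _ ≤ dsum y v := Finset.sum_le_sum_of_subset hsub
        _ ≤ 2 := hy2 v
    have hge : 2 ≤ (c.edges.toFinset.filter (fun e => v ∈ e)).card := by
      have hsub : ({e₁, e₂} : Finset (Sym2 V)) ⊆ c.edges.toFinset.filter (fun e => v ∈ e) := by
        intro x hx
        simp only [Finset.mem_insert, Finset.mem_singleton] at hx
        rcases hx with rfl | rfl <;> rw [Finset.mem_filter, List.mem_toFinset]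
        · exact ⟨hm1, hv1⟩
        · exact ⟨hm2, hv2⟩
      calc 2 = ({e₁, e₂} : Finset (Sym2 V)).card := by rw [Finset.card_pair h12]
        _ ≤ _ := Finset.card_le_card hsub
    omega
theorem main_aux [Fintype V] (G : SimpleGraph V) :
    ∀ (n : ℕ) (y : Sym2 V → ℕ), IsTwoMatching G y →
      (Finset.univ.filter (fun e : Sym2 V => y e = 1)).card ≤ n →
      ∃ y', IsTwoMatching G y' ∧ IsBasic G y' ∧ size y ≤ size y' ∧
        (∀ e, y' e ≠ 0 → y e ≠ 0) := by
  intro n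
  induction n with
  | zero =>
    intro y hy hcard
    have h1 : ∀ e, y e ≠ 1 := by
      intro e he
      have hmem : e ∈ Finset.univ.filter (fun e : Sym2 V => y e = 1) := by simp [he]
      have := Finset.card_pos.mpr ⟨e, hmem⟩
      omega
    exact ⟨y, hy, isBasic_of_no_ones h1, le_rfl, fun _ h => h⟩
  | succ n ih =>
    intro y hy hcard
    have hdsum : ∀ v : V, dsum y v ≤ 2 := hy.2.2
    by_cases h1 : ∀ e, y e ≠ 1
    · exact ⟨y, hy, isBasic_of_no_ones h1, le_rfl, fun _ h => h⟩
    push_neg at h1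
    obtain ⟨e₀, he₀⟩ := h1
    by_cases hdeg : ∀ (v : V) (e : Sym2 V), v ∈ e → y e = 1 → ∃ e', e' ≠ e ∧ v ∈ e' ∧ y e' = 1
    · -- every 1-covered vertex has two incident 1-edges: find a cycle
      obtain ⟨z, c, hcyc, hce⟩ : ∃ (z : V) (c : G.Walk z z), c.IsCycle ∧ ∀ e ∈ c.edges, y e = 1 := by
        revert he₀
        induction e₀ using Sym2.ind with
        | _ a b => exact fun he₀ => exists_cycle hy.1 hdsum hdeg he₀
      obtain ⟨hnonc, hcard2⟩ := cycle_facts hdsum hcyc hce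
      have hnodup : c.edges.Nodup := hcyc.isTrail.edges_nodup
      have hEcard : c.edges.toFinset.card = c.length := by
        rw [List.toFinset_card_of_nodup hnodup, SimpleGraph.Walk.length_edges]
      have hlen3 := hcyc.three_le_length
      have hsumE : ∑ e ∈ c.edges.toFinset, y e = c.length := by
        calc ∑ e ∈ c.edges.toFinset, y e = ∑ e ∈ c.edges.toFinset, 1 := by
              refine Finset.sum_congr rfl (fun x hx => ?_)
              rw [List.mem_toFinset] at hx
              rw [hce x hx]
          _ = c.edges.toFinset.card := by simp
          _ = c.length := hEcard
      have hEsub : c.edges.toFinset ⊆ Finset.univ.filter (fun e : Sym2 V => y e = 1) := by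
        intro x hx
        rw [List.mem_toFinset] at hx
        simp [hce x hx]
      rcases Nat.even_or_odd c.length with heven | hodd
      · -- even cycle: flip to alternating 0/2 along the cycle
        have hnn : ¬ c.Nil := by
          rw [SimpleGraph.Walk.not_nil_iff_lt_length]
          omega
        have hcyc' : (SimpleGraph.Walk.cons (c.adj_snd hnn) c.tail).IsCycle := by
          rw [SimpleGraph.Walk.cons_tail_eq _ hnn]
          exact hcyc
        have hqpath : c.tail.IsPath :=
          ((SimpleGraph.Walk.cons_isCycle_iff _ _).mp hcyc').1
        have hEeq : c.edges = s(z, c.getVert 1) :: c.tail.edges := by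
          conv_lhs => rw [← SimpleGraph.Walk.cons_tail_eq c hnn]
          rw [SimpleGraph.Walk.edges_cons]
        have hlent : c.tail.length + 1 = c.length := SimpleGraph.Walk.length_tail_add_one hnn
        set zf := altAssign c.tail true with hzfdef
        have hzf0 : ∀ e, zf e = 0 ∨ (e ∈ c.tail.edges ∧ zf e = 2) := fun e =>
          altAssign_eq_zero_or c.tail true e
        have hzfd : ∀ w, dsum zf w ≤ 2 := (altAssign_dsum hqpath true).2
        have hzfsize : ∑ e : Sym2 V, zf e = c.length := by
          rw [hzfdef, altAssign_size hqpath true]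
          rcases heven with ⟨k, hk⟩
          simp only [if_pos]
          omega
        have hzfE : ∑ e ∈ c.edges.toFinset, zf e = ∑ e : Sym2 V, zf e := by
          apply Finset.sum_subset (Finset.subset_univ _)
          intro x _ hx
          rcases hzf0 x with h0 | ⟨hm, _⟩
          · exact h0
          · exact absurd (List.mem_toFinset.mpr (by rw [hEeq]; exact List.mem_cons_of_mem _ hm)) hx
        set y₂ := fun e => if e ∈ c.edges then zf e else y e with hy₂def
        have hval : ∀ e, (e ∈ c.edges → y₂ e = zf e) ∧ (e ∉ c.edges → y₂ e = y e) := by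
          intro e
          constructor <;> intro h
          · rw [hy₂def]; simp only [if_pos h]
          · rw [hy₂def]; simp only [if_neg h]
        have hsupp₂ : ∀ e', y₂ e' ≠ 0 → y e' ≠ 0 := by
          intro e' he'
          by_cases hin : e' ∈ c.edges
          · rw [hce e' hin]; omega
          · rwa [(hval e').2 hin] at he'
        have hdsum₂ : ∀ v : V, dsum y₂ v ≤ 2 := by
          intro v
          have hg : dsum y₂ v =
              (∑ e ∈ c.edges.toFinset.filter (fun e => v ∈ e), zf e) +
              (∑ e ∈ (Finset.univ.filter (fun e : Sym2 V => v ∈ e)).filter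
                (fun e => e ∉ c.edges), y e) := by
            rw [hy₂def]; exact dsum_graft y zf c.edges v
          rw [hg]
          by_cases hv : v ∈ c.support
          · have hz2 : ∑ e ∈ (Finset.univ.filter (fun e : Sym2 V => v ∈ e)).filter
                (fun e => e ∉ c.edges), y e = 0 := by
              apply Finset.sum_eq_zero
              intro x hx
              rw [Finset.mem_filter, Finset.mem_filter] at hx
              exact hnonc v hv x hx.1.2 hx.2
            have hz1 : ∑ e ∈ c.edges.toFinset.filter (fun e => v ∈ e), zf e ≤ dsum zf v := by
              apply Finset.sum_le_sum_of_subset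
              intro x hx
              rw [Finset.mem_filter] at hx ⊢
              exact ⟨Finset.mem_univ x, hx.2⟩
            have := hzfd v
            omega
          · have hz1 : ∑ e ∈ c.edges.toFinset.filter (fun e => v ∈ e), zf e = 0 := by
              apply Finset.sum_eq_zero
              intro x hx
              rw [Finset.mem_filter, List.mem_toFinset] at hx
              exact absurd (mem_support_of_mem_edge hx.1 hx.2) hv
            have hz2 : ∑ e ∈ (Finset.univ.filter (fun e : Sym2 V => v ∈ e)).filter
                (fun e => e ∉ c.edges), y e ≤ dsum y v :=
              Finset.sum_le_sum_of_subset (Finset.filter_subset _ _)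
            have := hdsum v
            omega
        have hmatch₂ : IsTwoMatching G y₂ := by
          refine ⟨fun e he => hy.1 e (hsupp₂ e he), ?_, hdsum₂⟩
          intro e
          by_cases hin : e ∈ c.edges
          · rw [(hval e).1 hin]
            rcases hzf0 e with h0 | ⟨_, h2⟩ <;> omega
          · rw [(hval e).2 hin]
            exact hy.2.1 e
        have hsize₂ : size y₂ = size y := by
          have hg : (∑ e : Sym2 V, y₂ e) =
              (∑ e ∈ c.edges.toFinset, zf e) +
              (∑ e ∈ Finset.univ.filter (fun e : Sym2 V => e ∉ c.edges), y e) := by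
            rw [hy₂def]; exact size_graft y zf c.edges
          have hs := size_split y c.edges
          unfold size at hs ⊢
          rw [hg, hzfE, hzfsize]
          omega
        have hcard₂ : (Finset.univ.filter (fun e : Sym2 V => y₂ e = 1)).card ≤ n := by
          have hsub : Finset.univ.filter (fun e : Sym2 V => y₂ e = 1) ⊆
              (Finset.univ.filter (fun e : Sym2 V => y e = 1)) \ c.edges.toFinset := by
            intro x hx
            rw [Finset.mem_filter] at hx
            rw [Finset.mem_sdiff, Finset.mem_filter]
            by_cases hin : x ∈ c.edges
            · exfalso
              rw [(hval x).1 hin] at hx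
              rcases hzf0 x with h0 | ⟨_, h2⟩ <;> omega
            · rw [(hval x).2 hin] at hx
              exact ⟨⟨Finset.mem_univ x, hx.2⟩, fun hc => hin (List.mem_toFinset.mp hc)⟩
          have hc1 := Finset.card_le_card hsub
          have hc2 := Finset.card_sdiff_of_subset hEsub
          omega
        obtain ⟨y', hy', hb', hsz', hsupp'⟩ := ih y₂ hmatch₂ hcard₂
        exact ⟨y', hy', hb', by omega, fun e' he' => hsupp₂ e' (hsupp' e' he')⟩
      · -- odd cycle: remove it, recurse, and put it back as a circuit of 1s
        set y₂ := fun e => if e ∈ c.edges then 0 else y e with hy₂def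
        have hle₂ : ∀ e, y₂ e ≤ y e := by
          intro e
          rw [hy₂def]
          dsimp only
          split_ifs <;> omega
        have hsupp₂ : ∀ e', y₂ e' ≠ 0 → y e' ≠ 0 := fun e' he' => by
          have := hle₂ e'; omega
        have hdsum₂le : ∀ v : V, dsum y₂ v ≤ dsum y v := fun v =>
          Finset.sum_le_sum (fun e _ => hle₂ e)
        have hmatch₂ : IsTwoMatching G y₂ :=
          ⟨fun e he => hy.1 e (hsupp₂ e he), fun e => le_trans (hle₂ e) (hy.2.1 e),
            fun v => le_trans (hdsum₂le v) (hdsum v)⟩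
        have hdzero : ∀ v ∈ c.support, dsum y₂ v = 0 := by
          intro v hv
          apply Finset.sum_eq_zero
          intro x hx
          rw [Finset.mem_filter] at hx
          rw [hy₂def]
          dsimp only
          split_ifs with hin
          · rfl
          · exact hnonc v hv x hx.2 hin
        have hsize₂ : size y₂ + c.length = size y := by
          have hg : (∑ e : Sym2 V, y₂ e) =
              (∑ e ∈ c.edges.toFinset, (0 : ℕ)) +
              (∑ e ∈ Finset.univ.filter (fun e : Sym2 V => e ∉ c.edges), y e) := by
            rw [hy₂def]; exact size_graft y (fun _ => 0) c.edges
          have hs := size_split y c.edges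
          unfold size at hs ⊢
          rw [hg, Finset.sum_const_zero]
          omega
        have hcard₂ : (Finset.univ.filter (fun e : Sym2 V => y₂ e = 1)).card ≤ n := by
          have hsub : Finset.univ.filter (fun e : Sym2 V => y₂ e = 1) ⊆
              (Finset.univ.filter (fun e : Sym2 V => y e = 1)) \ c.edges.toFinset := by
            intro x hx
            rw [Finset.mem_filter] at hx
            rw [Finset.mem_sdiff, Finset.mem_filter]
            by_cases hin : x ∈ c.edges
            · exfalso
              rw [hy₂def] at hx
              simp only [if_pos hin] at hx
              omega
            · rw [hy₂def] at hx
              simp only [if_neg hin] at hx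
              exact ⟨⟨Finset.mem_univ x, hx.2⟩, fun hc => hin (List.mem_toFinset.mp hc)⟩
          have hc1 := Finset.card_le_card hsub
          have hc2 := Finset.card_sdiff_of_subset hEsub
          omega
        obtain ⟨y', hy', hb', hsz', hsupp'⟩ := ih y₂ hmatch₂ hcard₂
        have hdzero' : ∀ v ∈ c.support, dsum y' v = 0 := by
          intro v hv
          by_contra hne0
          have := dsum_mono_support hsupp' hne0
          exact this (hdzero v hv)
        have hy'E : ∀ e ∈ c.edges, y' e = 0 := by
          intro e he
          have hv : ∃ v, v ∈ e ∧ v ∈ c.support := by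
            induction e using Sym2.ind with
            | _ a' b' => exact ⟨a', by simp, c.fst_mem_support_of_mem_edges he⟩
          obtain ⟨v, hve, hvs⟩ := hv
          have := edge_le_dsum y' hve
          have := hdzero' v hvs
          omega
        set y'' := fun e => if e ∈ c.edges then 1 else y' e with hy''def
        have hval : ∀ e, (e ∈ c.edges → y'' e = 1) ∧ (e ∉ c.edges → y'' e = y' e) := by
          intro e
          constructor <;> intro h
          · rw [hy''def]; simp only [if_pos h]
          · rw [hy''def]; simp only [if_neg h]
        have hsupp'' : ∀ e, y'' e ≠ 0 → y e ≠ 0 := by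
          intro e he
          by_cases hin : e ∈ c.edges
          · rw [hce e hin]; omega
          · rw [(hval e).2 hin] at he
            exact hsupp₂ e (hsupp' e he)
        have hmatch'' : IsTwoMatching G y'' := by
          refine ⟨?_, ?_, ?_⟩
          · intro e he
            by_cases hin : e ∈ c.edges
            · exact hy.1 e (by rw [hce e hin]; omega)
            · rw [(hval e).2 hin] at he
              exact hy'.1 e he
          · intro e
            by_cases hin : e ∈ c.edges
            · rw [(hval e).1 hin]; omega
            · rw [(hval e).2 hin]; exact hy'.2.1 e
          · intro v
            have hg : dsum y'' v =
                (∑ e ∈ c.edges.toFinset.filter (fun e => v ∈ e), (1 : ℕ)) +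
                (∑ e ∈ (Finset.univ.filter (fun e : Sym2 V => v ∈ e)).filter
                  (fun e => e ∉ c.edges), y' e) := by
              rw [hy''def]; exact dsum_graft y' (fun _ => 1) c.edges v
            have hgoal : dsum y'' v ≤ 2 := by
              rw [hg]
              by_cases hv : v ∈ c.support
              · have h1' : ∑ e ∈ c.edges.toFinset.filter (fun e => v ∈ e), (1 : ℕ) = 2 := by
                  rw [Finset.sum_const, smul_eq_mul, hcard2 v hv]
                have h2' : ∑ e ∈ (Finset.univ.filter (fun e : Sym2 V => v ∈ e)).filter
                    (fun e => e ∉ c.edges), y' e = 0 := by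
                  apply Finset.sum_eq_zero
                  intro x hx
                  rw [Finset.mem_filter, Finset.mem_filter] at hx
                  have := edge_le_dsum y' hx.1.2
                  have := hdzero' v hv
                  omega
                omega
              · have h1' : ∑ e ∈ c.edges.toFinset.filter (fun e => v ∈ e), (1 : ℕ) = 0 := by
                  apply Finset.sum_eq_zero
                  intro x hx
                  rw [Finset.mem_filter, List.mem_toFinset] at hx
                  exact absurd (mem_support_of_mem_edge hx.1 hx.2) hv
                have h2' : ∑ e ∈ (Finset.univ.filter (fun e : Sym2 V => v ∈ e)).filter
                    (fun e => e ∉ c.edges), y' e ≤ dsum y' v :=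
                  Finset.sum_le_sum_of_subset (Finset.filter_subset _ _)
                have hd' : dsum y' v ≤ 2 := hy'.2.2 v
                omega
            exact hgoal
        have hsize'' : size y'' = size y' + c.length := by
          have hg : (∑ e : Sym2 V, y'' e) =
              (∑ e ∈ c.edges.toFinset, (1 : ℕ)) +
              (∑ e ∈ Finset.univ.filter (fun e : Sym2 V => e ∉ c.edges), y' e) := by
            rw [hy''def]; exact size_graft y' (fun _ => 1) c.edges
          have hs := size_split y' c.edges
          have hE0 : ∑ e ∈ c.edges.toFinset, y' e = 0 :=
            Finset.sum_eq_zero (fun x hx => hy'E x (List.mem_toFinset.mp hx))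
          have hE1 : ∑ e ∈ c.edges.toFinset, (1 : ℕ) = c.length := by
            rw [Finset.sum_const, smul_eq_mul, hEcard]; omega
          unfold size at hs ⊢
          omega
        obtain ⟨C', hC1, hC2, hC3⟩ := hb'
        refine ⟨y'', hmatch'', ⟨insert ⟨z, c⟩ C', ?_, ?_, ?_⟩, by omega, hsupp''⟩
        · intro c₁ hc₁
          rcases Set.mem_insert_iff.mp hc₁ with rfl | hmem
          · exact ⟨hcyc, hodd⟩
          · exact hC1 c₁ hmem
        · have key : ∀ d ∈ C', Disjoint {v | v ∈ c.support} {v | v ∈ d.2.support} := by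
            intro d hd
            rw [Set.disjoint_left]
            intro v hv1 hv2
            obtain ⟨e, hed, hve⟩ := mem_edge_of_mem_cycle_support (hC1 d hd).1 hv2
            have he1 : y' e = 1 := (Set.ext_iff.mp hC3 e).mpr (Set.mem_biUnion hd hed)
            have := edge_le_dsum y' hve
            have := hdzero' v hv1
            omega
          intro c₁ hc₁ c₂ hc₂ hne
          rcases Set.mem_insert_iff.mp hc₁ with rfl | hm1 <;>
            rcases Set.mem_insert_iff.mp hc₂ with rfl | hm2
          · exact absurd rfl hne
          · exact key c₂ hm2
          · exact (key c₁ hm1).symm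
          · exact hC2 c₁ hm1 c₂ hm2 hne
        · rw [Set.biUnion_insert, ← hC3]
          ext e
          simp only [Set.mem_setOf_eq, Set.mem_union]
          constructor
          · intro he
            by_cases hin : e ∈ c.edges
            · left; exact hin
            · right
              rw [(hval e).2 hin] at he
              exact he
          · rintro (he | he)
            · exact (hval e).1 he
            · have hnin : e ∉ c.edges := fun hc => by
                have := hy'E e hc
                omega
              rw [(hval e).2 hnin]
              exact he
    · -- some vertex has a unique incident 1-edge
      push_neg at hdeg
      obtain ⟨v, e, hv, he1, huniq⟩ := hdeg
      obtain ⟨w, rfl⟩ := Sym2.mem_iff_exists.mp hv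
      have hzero_v : ∀ e', v ∈ e' → e' ≠ s(v, w) → y e' = 0 := by
        intro e' hv' hne
        have hp := pair_le_dsum y hne hv' hv
        have hd := hdsum v
        have hne1 := huniq e' hne hv'
        omega
      have hdv : dsum y v = 1 := by rw [dsum_single hv hzero_v, he1]
      have hvwmem : s(v, w) ∈ Finset.univ.filter (fun e : Sym2 V => y e = 1) := by simp [he1]
      by_cases hw : ∃ f, w ∈ f ∧ f ≠ s(v, w) ∧ y f = 1
      · obtain ⟨f, hwf, hfne, hf1⟩ := hw
        have hvf : v ∉ f := fun hvf => (huniq f hfne hvf) hf1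
        set y₂ := Function.update (Function.update y s(v, w) 2) f 0 with hy₂def
        have hval_e : y₂ s(v, w) = 2 := by
          rw [hy₂def, Function.update_of_ne (Ne.symm hfne), Function.update_self]
        have hval_f : y₂ f = 0 := by rw [hy₂def, Function.update_self]
        have hval_other : ∀ e', e' ≠ s(v, w) → e' ≠ f → y₂ e' = y e' := by
          intro e' h1' h2'
          rw [hy₂def, Function.update_of_ne h2', Function.update_of_ne h1']
        have hupf : (Function.update y s(v, w) 2) f = 1 := by
          rw [Function.update_of_ne hfne]; exact hf1
        have hdsum₂ : ∀ z, dsum y₂ z ≤ 2 := by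
          intro z
          rw [hy₂def, dsum_update, hupf, dsum_update, he1]
          have hd := hdsum z
          split_ifs with hz1 hz2 hz2
          · have h1' := edge_le_dsum y hz2; rw [he1] at h1'; omega
          · omega
          · have hzv : z = v := by
              rcases Sym2.mem_iff.mp hz2 with rfl | rfl
              · rfl
              · exact absurd (by simpa using hwf) hz1
            subst hzv
            omega
          · omega
        have hmatch₂ : IsTwoMatching G y₂ := by
          refine ⟨?_, ?_, hdsum₂⟩
          · intro e' he'
            by_cases h1' : e' = s(v, w)
            · subst h1'; exact hy.1 _ (by omega)
            · by_cases h2' : e' = f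
              · subst h2'; rw [hval_f] at he'; omega
              · rw [hval_other e' h1' h2'] at he'
                exact hy.1 e' he'
          · intro e'
            by_cases h1' : e' = s(v, w)
            · subst h1'; omega
            · by_cases h2' : e' = f
              · subst h2'; omega
              · rw [hval_other e' h1' h2']; exact hy.2.1 e'
        have hsize₂ : size y₂ = size y := by
          have h1' := size_update (Function.update y s(v, w) 2) f 0
          have h2' := size_update y s(v, w) 2
          have h3' : y s(v, w) ≤ size y :=
            Finset.single_le_sum (fun _ _ => Nat.zero_le _) (Finset.mem_univ _)
          unfold size at *
          rw [hy₂def, h1', hupf, h2', he1]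
          omega
        have hcard₂ : (Finset.univ.filter (fun e : Sym2 V => y₂ e = 1)).card ≤ n := by
          have hsub : Finset.univ.filter (fun e : Sym2 V => y₂ e = 1) ⊆
              (Finset.univ.filter (fun e : Sym2 V => y e = 1)).erase s(v, w) := by
            intro x hx
            rw [Finset.mem_filter] at hx
            have hx1 : x ≠ s(v, w) := fun hc => by rw [hc, hval_e] at hx; omega
            have hx2 : x ≠ f := fun hc => by rw [hc, hval_f] at hx; omega
            rw [Finset.mem_erase, Finset.mem_filter]
            rw [hval_other x hx1 hx2] at hx
            exact ⟨hx1, Finset.mem_univ x, hx.2⟩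
          have hc1 := Finset.card_le_card hsub
          have hc2 := Finset.card_erase_of_mem hvwmem
          have hc3 := Finset.card_pos.mpr ⟨_, hvwmem⟩
          omega
        have hsupp₂ : ∀ e', y₂ e' ≠ 0 → y e' ≠ 0 := by
          intro e' he'
          by_cases h1' : e' = s(v, w)
          · subst h1'; omega
          · by_cases h2' : e' = f
            · subst h2'; rw [hval_f] at he'; omega
            · rwa [hval_other e' h1' h2'] at he'
        obtain ⟨y', hy', hb', hsz', hsupp'⟩ := ih y₂ hmatch₂ hcard₂
        exact ⟨y', hy', hb', by omega, fun e' he' => hsupp₂ e' (hsupp' e' he')⟩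
      · push_neg at hw
        have hzero_w : ∀ f, w ∈ f → f ≠ s(v, w) → y f = 0 := by
          intro f hwf hfne
          have hp := pair_le_dsum y hfne hwf (by simp : w ∈ s(v, w))
          have hd := hdsum w
          have := hw f hwf hfne
          omega
        have hdw : dsum y w = 1 := by rw [dsum_single (by simp : w ∈ s(v, w)) hzero_w, he1]
        set y₂ := Function.update y s(v, w) 2 with hy₂def
        have hval_e : y₂ s(v, w) = 2 := by rw [hy₂def, Function.update_self]
        have hval_other : ∀ e', e' ≠ s(v, w) → y₂ e' = y e' := fun e' h1' => by
          rw [hy₂def, Function.update_of_ne h1']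
        have hdsum₂ : ∀ z, dsum y₂ z ≤ 2 := by
          intro z
          rw [hy₂def, dsum_update]
          by_cases hz : z ∈ s(v, w) <;> simp only [hz, if_true, if_false]
          · have hzv : dsum y z = 1 := by
              rcases Sym2.mem_iff.mp hz with rfl | rfl
              · exact hdv
              · exact hdw
            omega
          · exact hdsum z
        have hmatch₂ : IsTwoMatching G y₂ := by
          refine ⟨?_, ?_, hdsum₂⟩
          · intro e' he'
            by_cases h1' : e' = s(v, w)
            · subst h1'; exact hy.1 _ (by omega)
            · rw [hval_other e' h1'] at he'; exact hy.1 e' he'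
          · intro e'
            by_cases h1' : e' = s(v, w)
            · subst h1'; omega
            · rw [hval_other e' h1']; exact hy.2.1 e'
        have hsize₂ : size y ≤ size y₂ := by
          have h2' := size_update y s(v, w) 2
          have h3' : y s(v, w) ≤ size y :=
            Finset.single_le_sum (fun _ _ => Nat.zero_le _) (Finset.mem_univ _)
          unfold size at *
          rw [hy₂def, h2', he1]
          rw [he1] at h3'
          omega
        have hcard₂ : (Finset.univ.filter (fun e : Sym2 V => y₂ e = 1)).card ≤ n := by
          have hsub : Finset.univ.filter (fun e : Sym2 V => y₂ e = 1) ⊆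
              (Finset.univ.filter (fun e : Sym2 V => y e = 1)).erase s(v, w) := by
            intro x hx
            rw [Finset.mem_filter] at hx
            have hx1 : x ≠ s(v, w) := fun hc => by rw [hc, hval_e] at hx; omega
            rw [Finset.mem_erase, Finset.mem_filter]
            rw [hval_other x hx1] at hx
            exact ⟨hx1, Finset.mem_univ x, hx.2⟩
          have hc1 := Finset.card_le_card hsub
          have hc2 := Finset.card_erase_of_mem hvwmem
          have hc3 := Finset.card_pos.mpr ⟨_, hvwmem⟩
          omega
        have hsupp₂ : ∀ e', y₂ e' ≠ 0 → y e' ≠ 0 := by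
          intro e' he'
          by_cases h1' : e' = s(v, w)
          · subst h1'; omega
          · rwa [hval_other e' h1'] at he'
        obtain ⟨y', hy', hb', hsz', hsupp'⟩ := ih y₂ hmatch₂ hcard₂
        exact ⟨y', hy', hb', by omega, fun e' he' => hsupp₂ e' (hsupp' e' he')⟩

end Aux

theorem stmt12 [Fintype V] (G : SimpleGraph V) (x : Sym2 V → ℕ)
    (hx : IsTwoMatching G x) :
    ∃ x', IsTwoMatching G x' ∧ IsBasic G x' ∧ size x ≤ size x' := by
  obtain ⟨x', h1, h2, h3, -⟩ :=
    main_aux G ((Finset.univ.filter (fun e : Sym2 V => x e = 1)).card) x hx le_rfl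
  exact ⟨x', h1, h2, h3⟩

end

end TF
end

section
/- Every 2k-regular finite simple undirected graph with k ≥ 2 has a 4-regular spanning subgraph; moreover such a subgraph can be taken as the union of two edge-disjoint 2-regular spanning subgraphs. -/
open scoped Classical

namespace TF

noncomputable section

variable {V : Type*} {W : Type*}

private lemma sym2_exists_mem (e : Sym2 V) : ∃ v, v ∈ e :=
  Sym2.ind (fun a b => ⟨a, Sym2.mem_mk_left a b⟩) e

private lemma card_filter_mem_sym2 [Fintype V] {a b : V} (hab : a ≠ b) :
    Finset.card (Finset.univ.filter (fun v => v ∈ s(a, b))) = 2 := by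
  classical
  have : (Finset.univ.filter (fun v => v ∈ s(a, b))) = {a, b} := by
    ext v; simp [Sym2.mem_iff]
  rw [this, Finset.card_insert_of_notMem (by simpa), Finset.card_singleton]

private lemma degree_eq_card_filter [Fintype V] (G : SimpleGraph V) (v : V) :
    Finset.card {e ∈ G.edgeFinset | v ∈ e} = G.degree v := by
  classical
  rw [← SimpleGraph.card_incidenceFinset_eq_degree, SimpleGraph.incidenceFinset_eq_filter]

lemma exists_orientation [Fintype V] (G : SimpleGraph V) (k : ℕ) (hk : 1 ≤ k)
    (hreg : G.IsRegularOfDegree (2 * k)) :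
    ∃ T H : Sym2 V → V, (∀ e ∈ G.edgeFinset, e = s(T e, H e) ∧ T e ≠ H e) ∧
      (∀ v, Finset.card {e ∈ G.edgeFinset | T e = v} = k) ∧
      (∀ v, Finset.card {e ∈ G.edgeFinset | H e = v} = k) := by
  classical
  -- Hall's condition for choosing tails
  set t : {e : Sym2 V // e ∈ G.edgeFinset} → Finset (V × Fin k) :=
    fun e => (Finset.univ.filter (· ∈ e.1)) ×ˢ Finset.univ with ht
  have hall : ∀ s : Finset {e : Sym2 V // e ∈ G.edgeFinset},
      s.card ≤ (s.biUnion t).card := by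
    intro s
    set A : Finset V := s.biUnion (fun e => Finset.univ.filter (· ∈ e.1)) with hA
    have hbU : s.biUnion t = A ×ˢ (Finset.univ : Finset (Fin k)) := by
      ext ⟨v, i⟩
      simp [ht, hA, Finset.mem_biUnion, Finset.mem_product]
    have hcard : (s.biUnion t).card = A.card * k := by
      rw [hbU, Finset.card_product, Finset.card_univ, Fintype.card_fin]
    -- double counting
    have hdc : ∑ v ∈ A, G.degree v = ∑ e ∈ G.edgeFinset, (A.filter (· ∈ e)).card := by
      have : ∀ v ∈ A, G.degree v = Finset.card {e ∈ G.edgeFinset | v ∈ e} := by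
        intro v _; rw [degree_eq_card_filter]
      rw [Finset.sum_congr rfl this]
      simp only [Finset.card_filter]
      rw [Finset.sum_comm]
    have hlow : 2 * s.card ≤ ∑ e ∈ G.edgeFinset, (A.filter (· ∈ e)).card := by
      have himg : s.image Subtype.val ⊆ G.edgeFinset := by
        intro e he
        obtain ⟨e', _, rfl⟩ := Finset.mem_image.mp he
        exact e'.2
      have hterm : ∀ e ∈ s.image Subtype.val, (A.filter (· ∈ e)).card = 2 := by
        intro e he
        obtain ⟨e', he's, rfl⟩ := Finset.mem_image.mp he
        have hmemA : ∀ v ∈ (e' : Sym2 V), v ∈ A := by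
          intro v hv
          exact Finset.mem_biUnion.mpr ⟨e', he's, by simpa using hv⟩
        have : A.filter (· ∈ (e' : Sym2 V)) = Finset.univ.filter (· ∈ (e' : Sym2 V)) := by
          ext v
          simp only [Finset.mem_filter, Finset.mem_univ, true_and]
          exact ⟨fun h => h.2, fun h => ⟨hmemA v h, h⟩⟩
        rw [this]
        obtain ⟨a, b, heq⟩ : ∃ a b, (e' : Sym2 V) = s(a, b) :=
          Sym2.ind (fun a b => ⟨a, b, rfl⟩) (e' : Sym2 V)
        have hne : a ≠ b := by
          have := G.not_isDiag_of_mem_edgeSet (SimpleGraph.mem_edgeFinset.mp e'.2)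
          rw [heq] at this
          simpa [Sym2.isDiag_iff_proj_eq] using this
        rw [heq]
        exact card_filter_mem_sym2 hne
      calc 2 * s.card = ∑ e ∈ s.image Subtype.val, 2 := by
            rw [Finset.sum_const, smul_eq_mul,
              Finset.card_image_of_injective _ Subtype.val_injective, mul_comm]
        _ = ∑ e ∈ s.image Subtype.val, (A.filter (· ∈ e)).card :=
            (Finset.sum_congr rfl (fun e he => (hterm e he).symm))
        _ ≤ _ := Finset.sum_le_sum_of_subset himg
    have hdeg : ∑ v ∈ A, G.degree v = A.card * (2 * k) := by
      rw [Finset.sum_congr rfl (fun v _ => hreg v), Finset.sum_const, smul_eq_mul]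
    rw [hcard]
    have h2 : 2 * s.card ≤ 2 * (A.card * k) := by
      rw [hdeg] at hdc
      calc 2 * s.card ≤ ∑ e ∈ G.edgeFinset, (A.filter (· ∈ e)).card := hlow
        _ = A.card * (2 * k) := hdc.symm
        _ = 2 * (A.card * k) := by ring
    exact Nat.le_of_mul_le_mul_left h2 (by norm_num)
  obtain ⟨g, hginj, hgmem⟩ := (Finset.all_card_le_biUnion_card_iff_exists_injective t).mp hall
  have hg1 : ∀ e : {e : Sym2 V // e ∈ G.edgeFinset}, (g e).1 ∈ e.1 := by
    intro e
    have := hgmem e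
    simp only [ht, Finset.mem_product, Finset.mem_filter, Finset.mem_univ, true_and] at this
    exact this.1
  set T : Sym2 V → V := fun e =>
    if h : e ∈ G.edgeFinset then (g ⟨e, h⟩).1 else Classical.choose (sym2_exists_mem e)
    with hT
  have hTmem : ∀ e ∈ G.edgeFinset, T e ∈ e := by
    intro e he
    simp only [hT, dif_pos he]
    exact hg1 ⟨e, he⟩
  set H : Sym2 V → V := fun e =>
    if h : T e ∈ e then Sym2.Mem.other' h else Classical.choose (sym2_exists_mem e)
    with hH
  have hpair : ∀ e ∈ G.edgeFinset, e = s(T e, H e) ∧ T e ≠ H e := by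
    intro e he
    have hm := hTmem e he
    have hHe : H e = Sym2.Mem.other' hm := by simp only [hH, dif_pos hm]
    have hspec := Sym2.other_spec' hm
    have hnd : ¬ (e : Sym2 V).IsDiag := G.not_isDiag_of_mem_edgeSet
      (SimpleGraph.mem_edgeFinset.mp he)
    have hne : Sym2.Mem.other' hm ≠ T e := by
      rw [← Sym2.other_eq_other']
      exact Sym2.other_ne hnd hm
    exact ⟨by rw [hHe, hspec], by rw [hHe]; exact fun hcon => hne hcon.symm⟩
  have hHmem : ∀ e ∈ G.edgeFinset, H e ∈ e := by
    intro e he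
    have hm := hTmem e he
    have hHe : H e = Sym2.Mem.other' hm := by simp only [hH, dif_pos hm]
    rw [hHe]
    exact Sym2.other_mem' hm
  -- tail fibers
  have hTle : ∀ v, Finset.card {e ∈ G.edgeFinset | T e = v} ≤ k := by
    intro v
    set f : Sym2 V → Fin k := fun e =>
      if h : e ∈ G.edgeFinset then (g ⟨e, h⟩).2 else ⟨0, hk⟩ with hf
    have hinj : Set.InjOn f ↑{e ∈ G.edgeFinset | T e = v} := by
      intro e1 he1 e2 he2 hfe
      simp only [Finset.coe_filter, Set.mem_setOf_eq] at he1 he2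
      simp only [hf, dif_pos he1.1, dif_pos he2.1] at hfe
      have hT1 : (g ⟨e1, he1.1⟩).1 = v := by
        have h' := he1.2; simp only [hT] at h'; rwa [dif_pos he1.1] at h'
      have hT2 : (g ⟨e2, he2.1⟩).1 = v := by
        have h' := he2.2; simp only [hT] at h'; rwa [dif_pos he2.1] at h'
      have : g ⟨e1, he1.1⟩ = g ⟨e2, he2.1⟩ := Prod.ext (hT1.trans hT2.symm) hfe
      exact congrArg Subtype.val (hginj this)
    have := Finset.card_le_card_of_injOn (t := (Finset.univ : Finset (Fin k))) f
      (fun _ _ => Finset.mem_univ _) hinj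
    simpa using this
  have hEcard : G.edgeFinset.card = Fintype.card V * k := by
    have h1 := G.sum_degrees_eq_twice_card_edges
    have h2 : ∑ v : V, G.degree v = Fintype.card V * (2 * k) := by
      rw [Finset.sum_congr rfl (fun v _ => hreg v), Finset.sum_const, smul_eq_mul,
        Finset.card_univ]
    have h3 : ∑ v : V, G.degree v = 2 * (Fintype.card V * k) := by rw [h2]; ring
    omega
  have hsum : ∑ v : V, Finset.card {e ∈ G.edgeFinset | T e = v} = Fintype.card V * k := by
    rw [← Finset.card_eq_sum_card_fiberwise (fun e _ => Finset.mem_univ (T e)), hEcard]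
  have hTfib : ∀ v, Finset.card {e ∈ G.edgeFinset | T e = v} = k := by
    intro v
    by_contra hne
    have hlt : Finset.card {e ∈ G.edgeFinset | T e = v} < k := lt_of_le_of_ne (hTle v) hne
    have : ∑ v : V, Finset.card {e ∈ G.edgeFinset | T e = v} < ∑ _v : V, k :=
      Finset.sum_lt_sum (fun i _ => hTle i) ⟨v, Finset.mem_univ v, hlt⟩
    rw [hsum, Finset.sum_const, smul_eq_mul, Finset.card_univ] at this
    omega
  -- head fibers
  have hHfib : ∀ v, Finset.card {e ∈ G.edgeFinset | H e = v} = k := by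
    intro v
    have hsplit : {e ∈ G.edgeFinset | v ∈ e} =
        {e ∈ G.edgeFinset | T e = v} ∪ {e ∈ G.edgeFinset | H e = v} := by
      ext e
      simp only [Finset.mem_filter, Finset.mem_union]
      constructor
      · rintro ⟨he, hv⟩
        obtain ⟨heq, -⟩ := hpair e he
        rw [heq, Sym2.mem_iff] at hv
        rcases hv with h | h
        · exact Or.inl ⟨he, h.symm⟩
        · exact Or.inr ⟨he, h.symm⟩
      · rintro (⟨he, h⟩ | ⟨he, h⟩)
        · refine ⟨he, ?_⟩; rw [← h]; exact hTmem e he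
        · refine ⟨he, ?_⟩; rw [← h]; exact hHmem e he
    have hdisj : Disjoint {e ∈ G.edgeFinset | T e = v} {e ∈ G.edgeFinset | H e = v} := by
      rw [Finset.disjoint_left]
      intro e he1 he2
      simp only [Finset.mem_filter] at he1 he2
      exact (hpair e he1.1).2 (he1.2.trans he2.2.symm)
    have hdeg : Finset.card {e ∈ G.edgeFinset | v ∈ e} = 2 * k := by
      rw [degree_eq_card_filter]; exact hreg v
    rw [hsplit, Finset.card_union_of_disjoint hdisj, hTfib v] at hdeg
    omega
  exact ⟨T, H, hpair, hTfib, hHfib⟩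
lemma exists_arc_matching [Fintype V] (A : Finset (Sym2 V)) (T H : Sym2 V → V) (d : ℕ)
    (hd : 1 ≤ d)
    (hT : ∀ v, Finset.card {e ∈ A | T e = v} = d)
    (hH : ∀ v, Finset.card {e ∈ A | H e = v} = d) :
    ∃ m : V → Sym2 V, (∀ v, m v ∈ A ∧ T (m v) = v) ∧
      Function.Injective (fun v => H (m v)) := by
  classical
  set t : V → Finset V := fun v => ({e ∈ A | T e = v}).image H with htdef
  have hall : ∀ s : Finset V, s.card ≤ (s.biUnion t).card := by
    intro s
    have h1 : (s.biUnion fun v => {e ∈ A | T e = v}).card = d * s.card := by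
      rw [Finset.card_biUnion]
      · rw [Finset.sum_congr rfl (fun v _ => hT v), Finset.sum_const, smul_eq_mul, mul_comm]
      · intro x _ y _ hxy
        rw [Function.onFun, Finset.disjoint_left]; intro e he1 he2
        simp only [Finset.mem_filter] at he1 he2
        exact hxy (he1.2.symm.trans he2.2)
    have hsub : (s.biUnion fun v => {e ∈ A | T e = v}) ⊆
        ((s.biUnion t).biUnion fun w => {e ∈ A | H e = w}) := by
      intro e he
      simp only [Finset.mem_biUnion, Finset.mem_filter] at he
      obtain ⟨v, hv, heA, hTe⟩ := he
      refine Finset.mem_biUnion.mpr ⟨H e, ?_, Finset.mem_filter.mpr ⟨heA, rfl⟩⟩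
      exact Finset.mem_biUnion.mpr ⟨v, hv,
        Finset.mem_image.mpr ⟨e, Finset.mem_filter.mpr ⟨heA, hTe⟩, rfl⟩⟩
    have h2 : ((s.biUnion t).biUnion fun w => {e ∈ A | H e = w}).card =
        d * (s.biUnion t).card := by
      rw [Finset.card_biUnion]
      · rw [Finset.sum_congr rfl (fun v _ => hH v), Finset.sum_const, smul_eq_mul, mul_comm]
      · intro x _ y _ hxy
        rw [Function.onFun, Finset.disjoint_left]; intro e he1 he2
        simp only [Finset.mem_filter] at he1 he2
        exact hxy (he1.2.symm.trans he2.2)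
    have hle := Finset.card_le_card hsub
    rw [h1, h2] at hle
    exact Nat.le_of_mul_le_mul_left hle hd
  obtain ⟨f, hfinj, hfmem⟩ := (Finset.all_card_le_biUnion_card_iff_exists_injective t).mp hall
  have hex : ∀ v, ∃ e, (e ∈ A ∧ T e = v) ∧ H e = f v := by
    intro v
    obtain ⟨e, he, hHe⟩ := Finset.mem_image.mp (hfmem v)
    exact ⟨e, Finset.mem_filter.mp he, hHe⟩
  choose m hm1 hm2 using hex
  refine ⟨m, hm1, ?_⟩
  intro a b hab
  apply hfinj
  simp only at hab
  rw [← hm2 a, ← hm2 b]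
  exact hab

lemma sdiff_matching_fibers [Fintype V] (A : Finset (Sym2 V)) (T H : Sym2 V → V) (d : ℕ)
    (hT : ∀ v, Finset.card {e ∈ A | T e = v} = d)
    (hH : ∀ v, Finset.card {e ∈ A | H e = v} = d)
    (m : V → Sym2 V) (hm : ∀ v, m v ∈ A ∧ T (m v) = v)
    (hinj : Function.Injective (fun v => H (m v))) :
    (∀ v, Finset.card {e ∈ A \ Finset.univ.image m | T e = v} = d - 1) ∧
    (∀ v, Finset.card {e ∈ A \ Finset.univ.image m | H e = v} = d - 1) := by
  classical
  constructor
  · intro v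
    have heq : {e ∈ A \ Finset.univ.image m | T e = v} =
        ({e ∈ A | T e = v}).erase (m v) := by
      ext e
      simp only [Finset.mem_filter, Finset.mem_sdiff, Finset.mem_erase, Finset.mem_image,
        Finset.mem_univ, true_and]
      constructor
      · rintro ⟨⟨heA, hne⟩, hTe⟩
        exact ⟨fun hcon => hne ⟨v, hcon.symm⟩, heA, hTe⟩
      · rintro ⟨hne, heA, hTe⟩
        refine ⟨⟨heA, ?_⟩, hTe⟩
        rintro ⟨w, rfl⟩
        have : w = v := ((hm w).2).symm.trans hTe
        exact hne (by rw [this])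
    rw [heq, Finset.card_erase_of_mem (Finset.mem_filter.mpr ⟨(hm v).1, (hm v).2⟩), hT v]
  · intro v
    have hbij : Function.Bijective (fun v => H (m v)) :=
      (Finite.injective_iff_bijective).mp hinj
    set σ := Equiv.ofBijective _ hbij with hσ
    have hσv : H (m (σ.symm v)) = v := σ.apply_symm_apply v
    have heq : {e ∈ A \ Finset.univ.image m | H e = v} =
        ({e ∈ A | H e = v}).erase (m (σ.symm v)) := by
      ext e
      simp only [Finset.mem_filter, Finset.mem_sdiff, Finset.mem_erase, Finset.mem_image,
        Finset.mem_univ, true_and]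
      constructor
      · rintro ⟨⟨heA, hne⟩, hHe⟩
        exact ⟨fun hcon => hne ⟨σ.symm v, hcon.symm⟩, heA, hHe⟩
      · rintro ⟨hne, heA, hHe⟩
        refine ⟨⟨heA, ?_⟩, hHe⟩
        rintro ⟨w, rfl⟩
        have hw : σ w = v := hHe
        have : w = σ.symm v := by rw [← hw, Equiv.symm_apply_apply]
        exact hne (by rw [this])
    rw [heq, Finset.card_erase_of_mem
      (Finset.mem_filter.mpr ⟨(hm (σ.symm v)).1, hσv⟩), hH v]

lemma matching_filter_eq [Fintype V] (A : Finset (Sym2 V)) (T H : Sym2 V → V)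
    (hpair : ∀ e ∈ A, e = s(T e, H e) ∧ T e ≠ H e)
    (m : V → Sym2 V) (hm : ∀ v, m v ∈ A ∧ T (m v) = v)
    (hinj : Function.Injective (fun v => H (m v))) (v : V) :
    Finset.card {e ∈ Finset.univ.image m | v ∈ e} = 2 := by
  classical
  have hbij : Function.Bijective (fun v => H (m v)) :=
    (Finite.injective_iff_bijective).mp hinj
  set σ := Equiv.ofBijective _ hbij with hσ
  have hσv : H (m (σ.symm v)) = v := σ.apply_symm_apply v
  have hmem : ∀ w, v ∈ m w ↔ (w = v ∨ w = σ.symm v) := by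
    intro w
    obtain ⟨heq, -⟩ := hpair (m w) (hm w).1
    constructor
    · intro hv
      rw [heq, Sym2.mem_iff] at hv
      rcases hv with h | h
      · left; rw [(hm w).2] at h; exact h.symm
      · right
        have : σ w = v := h.symm
        rw [← this, Equiv.symm_apply_apply]
    · rintro (rfl | rfl)
      · rw [heq]; rw [(hm w).2]; exact Sym2.mem_mk_left _ _
      · rw [heq]
        have : H (m (σ.symm v)) = v := hσv
        rw [this]; exact Sym2.mem_mk_right _ _
  have hset : {e ∈ Finset.univ.image m | v ∈ e} = {m v, m (σ.symm v)} := by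
    ext e
    simp only [Finset.mem_filter, Finset.mem_image, Finset.mem_univ, true_and,
      Finset.mem_insert, Finset.mem_singleton]
    constructor
    · rintro ⟨⟨w, rfl⟩, hv⟩
      rcases (hmem w).mp hv with rfl | rfl
      · exact Or.inl rfl
      · exact Or.inr rfl
    · rintro (rfl | rfl)
      · exact ⟨⟨v, rfl⟩, (hmem v).mpr (Or.inl rfl)⟩
      · exact ⟨⟨σ.symm v, rfl⟩, (hmem _).mpr (Or.inr rfl)⟩
  rw [hset]
  have hne : m v ≠ m (σ.symm v) := by
    intro hcon
    obtain ⟨-, hTH⟩ := hpair (m v) (hm v).1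
    apply hTH
    rw [(hm v).2]
    conv_rhs => rw [hcon]
    rw [hσv]
  rw [Finset.card_insert_of_notMem (by simpa using hne), Finset.card_singleton]

theorem stmt14 [Fintype V] (G : SimpleGraph V) (k : ℕ) (hk : 2 ≤ k)
    (hreg : G.IsRegularOfDegree (2 * k)) :
    ∃ F₁ F₂ : Set (Sym2 V), IsTwoRegularSpanning G F₁ ∧ IsTwoRegularSpanning G F₂ ∧
      Disjoint F₁ F₂ ∧ ∀ v : V, {e ∈ F₁ ∪ F₂ | v ∈ e}.ncard = 4 := by
  classical
  have hk1 : 1 ≤ k := by omega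
  obtain ⟨T, H, hpair, hTfib, hHfib⟩ := exists_orientation G k hk1 hreg
  obtain ⟨m₁, hm₁, hinj₁⟩ := exists_arc_matching G.edgeFinset T H k hk1 hTfib hHfib
  obtain ⟨hT', hH'⟩ := sdiff_matching_fibers G.edgeFinset T H k hTfib hHfib m₁ hm₁ hinj₁
  obtain ⟨m₂, hm₂, hinj₂⟩ := exists_arc_matching (G.edgeFinset \ Finset.univ.image m₁) T H
    (k - 1) (by omega) hT' hH'
  set M₁ := Finset.univ.image m₁ with hM₁
  set M₂ := Finset.univ.image m₂ with hM₂
  have hpair' : ∀ e ∈ G.edgeFinset \ M₁, e = s(T e, H e) ∧ T e ≠ H e :=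
    fun e he => hpair e (Finset.mem_sdiff.mp he).1
  have hc₁ : ∀ v, Finset.card {e ∈ M₁ | v ∈ e} = 2 :=
    matching_filter_eq G.edgeFinset T H hpair m₁ hm₁ hinj₁
  have hc₂ : ∀ v, Finset.card {e ∈ M₂ | v ∈ e} = 2 :=
    matching_filter_eq _ T H hpair' m₂ hm₂ hinj₂
  have hdisj : Disjoint M₁ M₂ := by
    rw [Finset.disjoint_right]
    intro e he2 he1
    obtain ⟨w, -, rfl⟩ := Finset.mem_image.mp he2
    exact (Finset.mem_sdiff.mp (hm₂ w).1).2 he1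
  have hsub₁ : (↑M₁ : Set (Sym2 V)) ⊆ G.edgeSet := by
    intro e he
    obtain ⟨w, -, rfl⟩ := Finset.mem_image.mp (by exact_mod_cast he)
    exact SimpleGraph.mem_edgeFinset.mp (hm₁ w).1
  have hsub₂ : (↑M₂ : Set (Sym2 V)) ⊆ G.edgeSet := by
    intro e he
    obtain ⟨w, -, rfl⟩ := Finset.mem_image.mp (by exact_mod_cast he)
    exact SimpleGraph.mem_edgeFinset.mp (Finset.mem_sdiff.mp (hm₂ w).1).1
  have hsetc : ∀ (M : Finset (Sym2 V)) (v : V),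
      {e ∈ (↑M : Set (Sym2 V)) | v ∈ e} = (↑({e ∈ M | v ∈ e}) : Set (Sym2 V)) := by
    intro M v; ext e; simp
  refine ⟨↑M₁, ↑M₂, ⟨hsub₁, ?_⟩, ⟨hsub₂, ?_⟩, ?_, ?_⟩
  · intro v; rw [hsetc, Set.ncard_coe_finset]; exact hc₁ v
  · intro v; rw [hsetc, Set.ncard_coe_finset]; exact hc₂ v
  · exact Finset.disjoint_coe.mpr hdisj
  · intro v
    have hu : ((↑M₁ : Set (Sym2 V)) ∪ ↑M₂) = ↑(M₁ ∪ M₂) := by simp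
    rw [hu, hsetc, Set.ncard_coe_finset, Finset.filter_union,
      Finset.card_union_of_disjoint (Finset.disjoint_filter_filter hdisj), hc₁, hc₂]


end

end TF
end

section
/- Let G be a d-regular finite simple undirected graph on n nodes with d = 2k + 1, k ≥ 2. Then G has a spanning subgraph H in which every node has degree 3 or 4 and the number of nodes of degree 3 in H is at most 8n/(d + 1). -/
open scoped Classical


section Helpers

open Finset SimpleGraph
open scoped Classical

variable {V : Type*} [Fintype V] [DecidableEq V]


lemma exists_perm_of_rowcol (M : Matrix V V ℕ) (r : ℕ) (hr : 0 < r)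
    (hrow : ∀ u, ∑ v, M u v = r) (hcol : ∀ v, ∑ u, M u v = r) :
    ∃ σ : Equiv.Perm V, ∀ u, M u (σ u) ≠ 0 := by
  classical
  have hall : ∀ A : Finset V,
      A.card ≤ (A.biUnion (fun u => univ.filter (fun v => M u v ≠ 0))).card := by
    intro A
    set B := A.biUnion (fun u => univ.filter (fun v => M u v ≠ 0)) with hB
    have h1 : A.card * r ≤ ∑ u ∈ A, ∑ v ∈ B, M u v := by
      rw [← Finset.sum_const_nat (m := r) (fun _ _ => rfl)]
      refine Finset.sum_le_sum (fun u hu => ?_)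
      have : ∑ v ∈ univ.filter (fun v => M u v ≠ 0), M u v = r := by
        rw [Finset.sum_filter_ne_zero, hrow]
      rw [← this]
      refine Finset.sum_le_sum_of_subset (fun v hv => ?_)
      exact hB ▸ Finset.mem_biUnion.mpr ⟨u, hu, hv⟩
    have h2 : ∑ u ∈ A, ∑ v ∈ B, M u v ≤ B.card * r := by
      calc ∑ u ∈ A, ∑ v ∈ B, M u v ≤ ∑ u, ∑ v ∈ B, M u v :=
            Finset.sum_le_sum_of_subset (Finset.subset_univ A)
        _ = ∑ v ∈ B, ∑ u, M u v := Finset.sum_comm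
        _ = B.card * r := by
            rw [Finset.sum_congr rfl (fun v _ => hcol v), Finset.sum_const, smul_eq_mul]
    exact Nat.le_of_mul_le_mul_right (h1.trans h2) hr
  obtain ⟨g, hginj, hg⟩ :=
    (Finset.all_card_le_biUnion_card_iff_exists_injective
      (fun u => univ.filter (fun v => M u v ≠ 0))).mp hall
  refine ⟨Equiv.ofBijective g ((Finite.injective_iff_bijective).mp hginj), fun u => ?_⟩
  have := hg u
  simp only [Finset.mem_filter] at this
  exact this.2

lemma exists_birkhoff (r : ℕ) (M : Matrix V V ℕ)
    (hrow : ∀ u, ∑ v, M u v = r) (hcol : ∀ v, ∑ u, M u v = r) :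
    ∃ σ : Fin r → Equiv.Perm V, ∀ u v, M u v = ∑ i, (if σ i u = v then 1 else 0) := by
  classical
  induction r generalizing M with
  | zero =>
      refine ⟨Fin.elim0, fun u v => ?_⟩
      have h1 : M u v ≤ ∑ w, M u w := Finset.single_le_sum (fun _ _ => Nat.zero_le _) (mem_univ v)
      simp [hrow u] at h1
      simp [h1]
  | succ r ih =>
      obtain ⟨σ0, hσ0⟩ := exists_perm_of_rowcol M (r+1) (Nat.succ_pos r) hrow hcol
      set P : Matrix V V ℕ := fun u v => if σ0 u = v then 1 else 0 with hP
      have hPle : ∀ u v, P u v ≤ M u v := by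
        intro u v
        by_cases h : σ0 u = v
        · subst h; simpa [hP] using Nat.one_le_iff_ne_zero.mpr (hσ0 u)
        · simp [hP, h]
      set M' : Matrix V V ℕ := fun u v => M u v - P u v with hM'
      have hsplit : ∀ u v, M u v = M' u v + P u v := by
        intro u v; rw [hM']; exact (Nat.sub_add_cancel (hPle u v)).symm
      have hProw : ∀ u, ∑ v, P u v = 1 := by
        intro u; rw [hP]; simp
      have hPcol : ∀ v, ∑ u, P u v = 1 := by
        intro v
        rw [hP]
        simp [Equiv.apply_eq_iff_eq_symm_apply]
      have hrow' : ∀ u, ∑ v, M' u v = r := by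
        intro u
        have := hrow u
        rw [Finset.sum_congr rfl (fun v _ => hsplit u v), Finset.sum_add_distrib, hProw] at this
        omega
      have hcol' : ∀ v, ∑ u, M' u v = r := by
        intro v
        have := hcol v
        rw [Finset.sum_congr rfl (fun u _ => hsplit u v), Finset.sum_add_distrib, hPcol] at this
        omega
      obtain ⟨σ', hσ'⟩ := ih M' hrow' hcol'
      refine ⟨Fin.cons σ0 σ', fun u v => ?_⟩
      rw [Fin.sum_univ_succ]
      simp only [Fin.cons_zero, Fin.cons_succ]
      rw [hsplit u v, ← hσ' u v, hP]
      ring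

end Helpers

section Helpers2

set_option linter.unusedSectionVars false

open Finset SimpleGraph
open scoped Classical

variable {V : Type*} [DecidableEq V]


lemma dart_balance {G : SimpleGraph V} {u w : V} (p : G.Walk u w) (v : V) :
    (p.darts.countP (fun d => d.toProd.1 = v)) + (if v = w then 1 else 0) =
    (p.darts.countP (fun d => d.toProd.2 = v)) + (if v = u then 1 else 0) := by
  induction p with
  | nil => simp
  | @cons a b c hadj q ih =>
      simp only [Walk.darts_cons, List.countP_cons, decide_eq_true_eq]
      split_ifs at ih ⊢ <;> subst_vars <;> first | omega | simp_all

lemma sym2_exists_mem (e : Sym2 V) : ∃ x, x ∈ e := by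
  induction e using Sym2.inductionOn with
  | hf a b => exact ⟨a, Sym2.mem_mk_left a b⟩

lemma count_helper {α : Type*} [DecidableEq α] (l : List α) (hl : l.Nodup)
    (P : α → Prop) [DecidablePred P] :
    (l.toFinset.filter P).card = l.countP (fun a => decide (P a)) := by
  induction l with
  | nil => simp
  | cons a t ihl =>
      rw [List.nodup_cons] at hl
      rw [List.toFinset_cons, Finset.filter_insert, List.countP_cons]
      by_cases hPa : P a
      · rw [if_pos hPa]
        rw [Finset.card_insert_of_notMem (by simp [hl.1])]
        simp [hPa, ihl hl.2]
      · rw [if_neg hPa]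
        simp [hPa, ihl hl.2]

lemma exists_orientation (n : ℕ) : ∀ (E : Finset (Sym2 V)), E.card ≤ n →
    (∀ e ∈ E, ¬ e.IsDiag) →
    ∃ h : Sym2 V → V, (∀ e ∈ E, h e ∈ e) ∧ ∀ v : V,
      2 * (E.filter fun e => v ∈ e ∧ h e ≠ v).card ≤ (E.filter fun e => v ∈ e).card + 1 ∧
      2 * (E.filter fun e => v ∈ e ∧ h e = v).card ≤ (E.filter fun e => v ∈ e).card + 1 := by
  induction n with
  | zero =>
      intro E hcard _
      have hE : E = ∅ := Finset.card_eq_zero.mp (Nat.le_zero.mp hcard)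
      subst hE
      exact ⟨fun e => Classical.choose (sym2_exists_mem e), by simp, by simp⟩
  | succ n ih =>
      intro E hcard hdiag
      rcases Finset.eq_empty_or_nonempty E with rfl | hne
      · exact ⟨fun e => Classical.choose (sym2_exists_mem e), by simp, by simp⟩
      set G' : SimpleGraph V := SimpleGraph.fromEdgeSet (E : Set (Sym2 V)) with hG'
      have hadj : ∀ a b : V, G'.Adj a b ↔ s(a, b) ∈ E ∧ a ≠ b := by
        intro a b; rw [hG']; simp [SimpleGraph.fromEdgeSet_adj]
      have hedge_mem : ∀ {x y : V} (q : G'.Walk x y), ∀ e ∈ q.edges, e ∈ E := by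
        intro x y q e he
        have := q.edges_subset_edgeSet he
        rw [hG', SimpleGraph.edgeSet_fromEdgeSet] at this
        exact this.1
      have hlen_le : ∀ {x y : V} (q : G'.Walk x y), q.IsTrail → q.length ≤ E.card := by
        intro x y q hq
        have h1 : q.edges.toFinset ⊆ E := fun e he => hedge_mem q e (List.mem_toFinset.mp he)
        have h2 : q.edges.toFinset.card = q.edges.length := List.toFinset_card_of_nodup hq.edges_nodup
        have := Finset.card_le_card h1
        rw [h2, q.length_edges] at this
        exact this
      -- the set of trail lengths
      set S : Set ℕ := {m | ∃ (x : V) (y : V) (q : G'.Walk x y), q.IsTrail ∧ q.length = m} with hS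
      have hbdd : BddAbove S := by
        refine ⟨E.card, fun m hm => ?_⟩
        obtain ⟨x, y, q, hq, rfl⟩ := hm
        exact hlen_le q hq
      have hSne : 1 ∈ S := by
        obtain ⟨e, he⟩ := hne
        obtain ⟨⟨a, b⟩, rfl⟩ := Quot.exists_rep e
        have hab : G'.Adj a b := by
          rw [hadj]
          refine ⟨he, ?_⟩
          intro hab
          exact hdiag _ he (by simp [hab, Sym2.mk_isDiag_iff])
        exact ⟨a, b, SimpleGraph.Walk.cons hab SimpleGraph.Walk.nil, by simp, rfl⟩
      set N := sSup S with hN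
      have hNmem : N ∈ S := Nat.sSup_mem ⟨1, hSne⟩ hbdd
      have hN1 : 1 ≤ N := le_csSup hbdd hSne
      obtain ⟨u, w, p, htrail, hplen⟩ := hNmem
      have hmax : ∀ {x y : V} (q : G'.Walk x y), q.IsTrail → q.length ≤ N := by
        intro x y q hq
        exact le_csSup hbdd ⟨x, y, q, hq, rfl⟩
      -- endpoint saturation
      have hendw : ∀ x : V, G'.Adj w x → s(w, x) ∈ p.edges := by
        intro x hx
        by_contra hmem
        have hq : (p.concat hx).IsTrail := by
          constructor
          rw [SimpleGraph.Walk.edges_concat]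
          rw [List.concat_eq_append, List.nodup_append]
          simp [htrail.edges_nodup, hmem]
          intro a ha hc; exact hmem (hc ▸ ha)
        have := hmax _ hq
        rw [SimpleGraph.Walk.length_concat, hplen] at this
        omega
      have hendu : ∀ x : V, G'.Adj u x → s(u, x) ∈ p.edges := by
        intro x hx
        by_contra hmem
        have hmem' : s(u, x) ∉ p.reverse.edges := by
          rw [SimpleGraph.Walk.edges_reverse]
          simpa using hmem
        have hq : (p.reverse.concat hx).IsTrail := by
          constructor
          rw [SimpleGraph.Walk.edges_concat]
          rw [List.concat_eq_append, SimpleGraph.Walk.edges_reverse, List.nodup_append]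
          simp [htrail.edges_nodup, hmem]
          intro a ha hc; exact hmem (hc ▸ ha)
        have := hmax _ hq
        rw [SimpleGraph.Walk.length_concat, SimpleGraph.Walk.length_reverse, hplen] at this
        omega
      -- remove the trail's edges
      set Ep : Finset (Sym2 V) := p.edges.toFinset with hEp
      have hpsubE : Ep ⊆ E := fun e he => hedge_mem p e (List.mem_toFinset.mp he)
      set E' : Finset (Sym2 V) := E \ Ep with hE'
      have hE'card : E'.card ≤ n := by
        have hlt : E'.card < E.card := by
          apply Finset.card_lt_card
          rw [Finset.ssubset_iff_of_subset Finset.sdiff_subset]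
          have hne' : p.edges ≠ [] := by
            intro h0
            have h1 := p.length_edges
            rw [h0] at h1; simp at h1; omega
          obtain ⟨e, he⟩ := List.exists_mem_of_ne_nil _ hne'
          refine ⟨e, hedge_mem p e he, ?_⟩
          simp only [Finset.mem_sdiff, hEp, List.mem_toFinset, not_and, not_not]
          exact fun _ => he
        omega
      have hdiag' : ∀ e ∈ E', ¬ e.IsDiag := fun e he => hdiag e (Finset.mem_sdiff.mp he).1
      obtain ⟨h', hh'mem, hh'bal⟩ := ih E' hE'card hdiag'
      have hdartuniq : ∀ d ∈ p.darts, ∀ d' ∈ p.darts, d.edge = d'.edge → d = d' :=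
        fun d hd d' hd' hedge => List.inj_on_of_nodup_map htrail.edges_nodup hd hd' hedge
      set hfun : Sym2 V → V := fun e =>
        if hx : ∃ d ∈ p.darts, d.edge = e then (Classical.choose hx).toProd.2 else h' e with hfun_def
      have hfun_dart : ∀ d ∈ p.darts, hfun d.edge = d.toProd.2 := by
        intro d hd
        have hx : ∃ d' ∈ p.darts, d'.edge = d.edge := ⟨d, hd, rfl⟩
        rw [hfun_def]
        simp only [dif_pos hx]
        obtain ⟨hd', hedge⟩ := Classical.choose_spec hx
        rw [hdartuniq _ hd' _ hd hedge]
      have hfun_notp : ∀ e, e ∉ p.edges → hfun e = h' e := by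
        intro e he
        rw [hfun_def]
        simp only []
        rw [dif_neg]
        rintro ⟨d, hd, hedge⟩
        exact he (hedge ▸ List.mem_map_of_mem (f := SimpleGraph.Dart.edge) hd)
      have hdartedge : ∀ d : G'.Dart, d.edge = s(d.toProd.1, d.toProd.2) := fun d => rfl
      have hmem_all : ∀ e ∈ E, hfun e ∈ e := by
        intro e he
        by_cases hp : e ∈ p.edges
        · obtain ⟨d, hd, rfl⟩ := List.mem_map.mp hp
          rw [hfun_dart d hd, hdartedge]
          exact Sym2.mem_mk_right _ _
        · rw [hfun_notp e hp]
          exact hh'mem e (Finset.mem_sdiff.mpr ⟨he, fun h => hp (List.mem_toFinset.mp h)⟩)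
      refine ⟨hfun, hmem_all, fun v => ?_⟩
      have hdartne : ∀ d ∈ p.darts, d.toProd.1 ≠ d.toProd.2 := by
        intro d _
        exact d.adj.ne
      -- counts over the trail edges
      have hcount1 : (Ep.filter fun e => v ∈ e ∧ hfun e ≠ v).card
          = p.darts.countP (fun d => d.toProd.1 = v) := by
        rw [hEp, count_helper p.edges htrail.edges_nodup _]
        show (p.darts.map SimpleGraph.Dart.edge).countP _ = _
        rw [List.countP_map]
        apply List.countP_congr
        intro d hd
        simp only [Function.comp, decide_eq_true_eq, hdartedge d,
          (show hfun s(d.toProd.1, d.toProd.2) = d.toProd.2 from hfun_dart d hd), Sym2.mem_iff,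
          decide_eq_decide]
        constructor
        · rintro ⟨hv | hv, hne⟩
          · exact hv.symm
          · exact absurd hv.symm hne
        · intro hv
          exact ⟨Or.inl hv.symm, fun hc => hdartne d hd (hv ▸ hc.symm ▸ rfl)⟩
      have hcount2 : (Ep.filter fun e => v ∈ e ∧ hfun e = v).card
          = p.darts.countP (fun d => d.toProd.2 = v) := by
        rw [hEp, count_helper p.edges htrail.edges_nodup _]
        show (p.darts.map SimpleGraph.Dart.edge).countP _ = _
        rw [List.countP_map]
        apply List.countP_congr
        intro d hd
        simp only [Function.comp, decide_eq_true_eq, hdartedge d,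
          (show hfun s(d.toProd.1, d.toProd.2) = d.toProd.2 from hfun_dart d hd), Sym2.mem_iff,
          decide_eq_decide]
        constructor
        · rintro ⟨_, hv⟩
          exact hv
        · intro hv
          exact ⟨Or.inr hv.symm, hv⟩
      -- filter splits
      have hsplit : ∀ (X : Finset (Sym2 V)) (g : Sym2 V → V),
          (X.filter fun e => v ∈ e ∧ g e = v).card + (X.filter fun e => v ∈ e ∧ g e ≠ v).card
            = (X.filter fun e => v ∈ e).card := by
        intro X g
        rw [← Finset.filter_filter, ← Finset.filter_filter]
        exact Finset.card_filter_add_card_filter_not (fun e => g e = v)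
      -- decomposition of E
      have hEeq : E' ∪ Ep = E := Finset.sdiff_union_of_subset hpsubE
      have hdisj : Disjoint E' Ep := Finset.sdiff_disjoint
      have hdecomp : ∀ P : Sym2 V → Prop, ∀ _ : DecidablePred P,
          (E.filter P).card = (E'.filter P).card + (Ep.filter P).card := by
        intro P hP
        rw [← hEeq, Finset.filter_union,
          Finset.card_union_of_disjoint (Finset.disjoint_filter_filter hdisj)]
      have hcongr1 : (E'.filter fun e => v ∈ e ∧ hfun e ≠ v)
          = (E'.filter fun e => v ∈ e ∧ h' e ≠ v) := by
        apply Finset.filter_congr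
        intro e he
        rw [hfun_notp e (fun h => (Finset.mem_sdiff.mp he).2 (List.mem_toFinset.mpr h))]
      have hcongr2 : (E'.filter fun e => v ∈ e ∧ hfun e = v)
          = (E'.filter fun e => v ∈ e ∧ h' e = v) := by
        apply Finset.filter_congr
        intro e he
        rw [hfun_notp e (fun h => (Finset.mem_sdiff.mp he).2 (List.mem_toFinset.mpr h))]
      -- endpoint saturation kills E' degrees
      have hend0 : ∀ z : V, (∀ x, G'.Adj z x → s(z, x) ∈ p.edges) →
          (E'.filter fun e => z ∈ e) = ∅ := by
        intro z hz
        rw [Finset.filter_eq_empty_iff]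
        intro e he hze
        rw [hE', Finset.mem_sdiff] at he
        obtain ⟨heE, hep⟩ := he
        have hxe : e = s(z, Sym2.Mem.other hze) := (Sym2.other_spec hze).symm
        have hadj' : G'.Adj z (Sym2.Mem.other hze) := by
          rw [hadj]
          refine ⟨hxe ▸ heE, fun hc => hdiag e heE ?_⟩
          rw [hxe, Sym2.mk_isDiag_iff]
          exact hc
        exact hep (List.mem_toFinset.mpr (hxe ▸ hz _ hadj'))
      -- arithmetic assembly
      have hbal := dart_balance p v
      obtain ⟨ih1, ih2⟩ := hh'bal v
      have hoE := hdecomp (fun e => v ∈ e ∧ hfun e ≠ v) inferInstance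
      have hiE := hdecomp (fun e => v ∈ e ∧ hfun e = v) inferInstance
      have hdE := hdecomp (fun e => v ∈ e) inferInstance
      rw [hcongr1, hcount1] at hoE
      rw [hcongr2, hcount2] at hiE
      have hsE' := hsplit E' h'
      have hsEp : (Ep.filter fun e => v ∈ e ∧ hfun e = v).card
          + (Ep.filter fun e => v ∈ e ∧ hfun e ≠ v).card = (Ep.filter fun e => v ∈ e).card :=
        hsplit Ep hfun
      rw [hcount1, hcount2] at hsEp
      have hale : (E'.filter fun e => v ∈ e ∧ h' e ≠ v).card ≤ (E'.filter fun e => v ∈ e).card := by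
        apply Finset.card_le_card
        intro e he
        rw [Finset.mem_filter] at he ⊢
        exact ⟨he.1, he.2.1⟩
      have hble : (E'.filter fun e => v ∈ e ∧ h' e = v).card ≤ (E'.filter fun e => v ∈ e).card := by
        apply Finset.card_le_card
        intro e he
        rw [Finset.mem_filter] at he ⊢
        exact ⟨he.1, he.2.1⟩
      by_cases hvu : v = u <;> by_cases hvw : v = w
      · rw [if_pos hvu, if_pos hvw] at hbal
        omega
      · rw [if_pos hvu, if_neg hvw] at hbal
        have h0 := hend0 u hendu
        rw [← hvu] at h0
        have hz : (E'.filter fun e => v ∈ e).card = 0 := by rw [h0]; simp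
        omega
      · rw [if_neg hvu, if_pos hvw] at hbal
        have h0 := hend0 w hendw
        rw [← hvw] at h0
        have hz : (E'.filter fun e => v ∈ e).card = 0 := by rw [h0]; simp
        omega
      · rw [if_neg hvu, if_neg hvw] at hbal
        omega

theorem main_assembly [Fintype V] (G : SimpleGraph V) (k : ℕ) (hk : 2 ≤ k)
    (hreg : G.IsRegularOfDegree (2 * k + 1)) :
    ∃ F : Finset (Sym2 V), ↑F ⊆ G.edgeSet ∧
      (∀ v : V, (F.filter fun e => v ∈ e).card = 3 ∨ (F.filter fun e => v ∈ e).card = 4) ∧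
      (2 * k + 2) * (univ.filter fun v : V => (F.filter fun e => v ∈ e).card = 3).card
        ≤ 8 * Fintype.card V := by
  classical
  set n := Fintype.card V with hn
  set E := G.edgeFinset with hE
  have hdiag : ∀ e ∈ E, ¬ e.IsDiag := fun e he =>
    G.not_isDiag_of_mem_edgeSet (mem_edgeFinset.mp he)
  have hdeg : ∀ v : V, (E.filter fun e => v ∈ e).card = 2 * k + 1 := by
    intro v
    rw [hE, ← incidenceFinset_eq_filter, card_incidenceFinset_eq_degree]
    exact hreg v
  -- orientation
  obtain ⟨h, hmem, hbal⟩ := exists_orientation E.card E le_rfl hdiag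
  have houtin : ∀ v : V, (E.filter fun e => v ∈ e ∧ h e ≠ v).card
      + (E.filter fun e => v ∈ e ∧ h e = v).card = 2 * k + 1 := by
    intro v
    rw [← hdeg v]
    simp only [ne_eq]
    rw [← Finset.filter_filter, ← Finset.filter_filter, Nat.add_comm]
    exact Finset.card_filter_add_card_filter_not (fun e => h e = v)
  have houtk : ∀ v : V, (E.filter fun e => v ∈ e ∧ h e ≠ v).card = k ∨
      (E.filter fun e => v ∈ e ∧ h e ≠ v).card = k + 1 := by
    intro v
    have h1 := (hbal v).1
    have h2 := (hbal v).2
    have h3 := houtin v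
    have h4 := hdeg v
    omega
  -- tail function
  have htl' : ∀ e : Sym2 V, ∃ a : V, e ∈ E → (e = s(a, h e) ∧ a ≠ h e) := by
    intro e
    by_cases he : e ∈ E
    · have hme : h e ∈ e := hmem e he
      refine ⟨Sym2.Mem.other hme, fun _ => ⟨?_, ?_⟩⟩
      · rw [Sym2.eq_swap, Sym2.other_spec hme]
      · exact Sym2.other_ne (hdiag e he) hme
    · exact ⟨h e, fun hc => absurd hc he⟩
  choose tl htl using htl'
  -- each edge has a unique tail vertex
  have hone : ∀ e ∈ E, (univ.filter fun v : V => v ∈ e ∧ h e ≠ v) = {tl e} := by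
    intro e he
    ext v
    simp only [Finset.mem_filter, Finset.mem_univ, true_and, Finset.mem_singleton]
    obtain ⟨hes, hane⟩ := htl e he
    constructor
    · rintro ⟨hv, hne⟩
      rw [hes, Sym2.mem_iff] at hv
      rcases hv with hv | hv
      · exact hv
      · exact absurd hv.symm (by simpa using hne)
    · intro hv
      subst hv
      refine ⟨?_, fun hc => hane hc.symm⟩
      have hm : tl e ∈ s(tl e, h e) := Sym2.mem_mk_left _ _
      rwa [← hes] at hm
  have hsumout : ∑ v : V, (E.filter fun e => v ∈ e ∧ h e ≠ v).card = E.card := by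
    have hinner : ∀ e ∈ E, (∑ v : V, if v ∈ e ∧ h e ≠ v then 1 else 0) = 1 := by
      intro e he
      calc ∑ v : V, (if v ∈ e ∧ h e ≠ v then 1 else 0)
          = (univ.filter fun v => v ∈ e ∧ h e ≠ v).card := (Finset.card_filter _ _).symm
        _ = 1 := by rw [hone e he, Finset.card_singleton]
    rw [Finset.sum_congr rfl (fun v (_ : v ∈ univ) => Finset.card_filter _ E), Finset.sum_comm]
    rw [Finset.sum_congr rfl hinner]
    simp
  have hsumdeg : n * (2 * k + 1) = 2 * E.card := by
    rw [hn, hE, ← SimpleGraph.sum_degrees_eq_twice_card_edges]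
    rw [Finset.sum_congr rfl (fun v _ => hreg v), Finset.sum_const, smul_eq_mul, Finset.card_univ, Nat.mul_comm]
  -- the two vertex classes
  set A : Finset V := univ.filter (fun v => (E.filter fun e => v ∈ e ∧ h e ≠ v).card = k)
    with hA
  set B : Finset V := univ.filter (fun v => (E.filter fun e => v ∈ e ∧ h e ≠ v).card = k + 1)
    with hB
  have hcardB : 2 * B.card = n := by
    have hsplitAB : B.card + (univ.filter (fun v : V =>
        ¬ ((E.filter fun e => v ∈ e ∧ h e ≠ v).card = k + 1))).card = n := by
      rw [hB, Finset.card_filter_add_card_filter_not, Finset.card_univ]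
    have hsum1 : ∑ v ∈ B, (E.filter fun e => v ∈ e ∧ h e ≠ v).card = B.card * (k + 1) :=
      Finset.sum_const_nat (fun v hv => by
        rw [hB] at hv
        exact (Finset.mem_filter.mp hv).2)
    have hsum2 : ∑ v ∈ univ.filter (fun v : V =>
        ¬ ((E.filter fun e => v ∈ e ∧ h e ≠ v).card = k + 1)),
        (E.filter fun e => v ∈ e ∧ h e ≠ v).card
        = (univ.filter (fun v : V =>
          ¬ ((E.filter fun e => v ∈ e ∧ h e ≠ v).card = k + 1))).card * k :=
      Finset.sum_const_nat (fun v hv => by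
        have h1 := (Finset.mem_filter.mp hv).2
        have h2 := houtk v
        omega)
    have hsum3 := Finset.sum_filter_add_sum_filter_not univ
      (fun v : V => (E.filter fun e => v ∈ e ∧ h e ≠ v).card = k + 1)
      (fun v => (E.filter fun e => v ∈ e ∧ h e ≠ v).card)
    rw [← hB] at hsum3
    rw [hsum1, hsum2, hsumout] at hsum3
    -- B.card * (k+1) + X * k = E.card, B.card + X = n, n * (2k+1) = 2 E.card
    set X := (univ.filter (fun v : V =>
      ¬ ((E.filter fun e => v ∈ e ∧ h e ≠ v).card = k + 1))).card with hX
    have e1 : 2 * (B.card * (k + 1) + X * k) = 2 * E.card := by rw [hsum3]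
    have e2 : 2 * (B.card * (k + 1) + X * k) = 2 * k * (B.card + X) + 2 * B.card := by ring
    have e3 : n * (2 * k + 1) = 2 * k * n + n := by ring
    rw [e2, hsplitAB] at e1
    rw [← hsumdeg, e3] at e1
    omega
  have hcardAB : A.card = B.card := by
    have hA' : A = univ.filter (fun v : V =>
        ¬ ((E.filter fun e => v ∈ e ∧ h e ≠ v).card = k + 1)) := by
      rw [hA]
      apply Finset.filter_congr
      intro v _
      have := houtk v
      constructor
      · intro h1; omega
      · intro h1; omega
    have hsplitAB : B.card + A.card = n := by
      rw [hA', hB, Finset.card_filter_add_card_filter_not, Finset.card_univ]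
    omega
  -- the bijection between A and B
  set π := Finset.equivOfCardEq hcardAB with hπ
  -- the matrix
  set M : Matrix V V ℕ := fun a b =>
    (if s(a, b) ∈ E ∧ h s(a, b) = b then 1 else 0) +
    (if ∃ ha : a ∈ A, ((π ⟨a, ha⟩ : {x // x ∈ B}) : V) = b then 1 else 0) with hM
  -- key edge reconstruction
  have hkey : ∀ (a : V) (e : Sym2 V), e ∈ E → a ∈ e → h e ≠ a → e = s(a, h e) := by
    intro a e he hae hne
    obtain ⟨hes, _⟩ := htl e he
    rw [hes, Sym2.mem_iff] at hae
    rcases hae with hae | hae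
    · rw [hae]; exact hes
    · exact absurd hae.symm hne
  have hrowfirst : ∀ a : V, (∑ b : V, if s(a, b) ∈ E ∧ h s(a, b) = b then 1 else 0)
      = (E.filter fun e => a ∈ e ∧ h e ≠ a).card := by
    intro a
    rw [← Finset.card_filter]
    apply Finset.card_bij' (fun b _ => s(a, b)) (fun e _ => h e)
    · intro b hb
      simp only [Finset.mem_filter, Finset.mem_univ, true_and] at hb
      rw [Finset.mem_filter]
      have hne : a ≠ b := fun hc => hdiag _ hb.1 (by rw [Sym2.mk_isDiag_iff]; exact hc)
      exact ⟨hb.1, Sym2.mem_mk_left _ _, by rw [hb.2]; exact fun hc => hne hc.symm⟩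
    · intro e he
      rw [Finset.mem_filter] at he
      obtain ⟨he1, he2, he3⟩ := he
      have hee := hkey a e he1 he2 he3
      simp only [Finset.mem_filter, Finset.mem_univ, true_and]
      rw [← hee]
      exact ⟨he1, rfl⟩
    · intro b hb
      simp only [Finset.mem_filter, Finset.mem_univ, true_and] at hb
      rw [hb.2]
    · intro e he
      rw [Finset.mem_filter] at he
      exact (hkey a e he.1 he.2.1 he.2.2).symm
  have hrowvirt : ∀ a : V,
      (∑ b : V, if ∃ ha : a ∈ A, ((π ⟨a, ha⟩ : {x // x ∈ B}) : V) = b then 1 else 0)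
      = if a ∈ A then 1 else 0 := by
    intro a
    by_cases ha : a ∈ A
    · rw [if_pos ha, ← Finset.card_filter]
      have : (univ.filter fun b => ∃ ha' : a ∈ A, ((π ⟨a, ha'⟩ : {x // x ∈ B}) : V) = b)
          = {((π ⟨a, ha⟩ : {x // x ∈ B}) : V)} := by
        ext b
        simp only [Finset.mem_filter, Finset.mem_univ, true_and, Finset.mem_singleton]
        constructor
        · rintro ⟨ha', hb⟩
          rw [← hb]
        · intro hb
          exact ⟨ha, hb.symm⟩
      rw [this, Finset.card_singleton]
    · rw [if_neg ha, ← Finset.card_filter]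
      have : (univ.filter fun b => ∃ ha' : a ∈ A, ((π ⟨a, ha'⟩ : {x // x ∈ B}) : V) = b)
          = ∅ := by
        rw [Finset.filter_eq_empty_iff]
        rintro b _ ⟨ha', _⟩
        exact ha ha'
      rw [this, Finset.card_empty]
  have hrow : ∀ a : V, ∑ b : V, M a b = k + 1 := by
    intro a
    rw [hM]
    simp only
    rw [Finset.sum_add_distrib, hrowfirst a, hrowvirt a]
    by_cases ha : a ∈ A
    · have h1 : (E.filter fun e => a ∈ e ∧ h e ≠ a).card = k := by
        rw [hA] at ha
        exact (Finset.mem_filter.mp ha).2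
      rw [if_pos ha, h1]
    · have h2 := houtk a
      have h1 : (E.filter fun e => a ∈ e ∧ h e ≠ a).card = k + 1 := by
        rcases h2 with h2 | h2
        · exfalso; apply ha; rw [hA, Finset.mem_filter]; exact ⟨mem_univ _, h2⟩
        · exact h2
      rw [if_neg ha, h1]
  have hcolfirst : ∀ b : V, (∑ a : V, if s(a, b) ∈ E ∧ h s(a, b) = b then 1 else 0)
      = (E.filter fun e => b ∈ e ∧ h e = b).card := by
    intro b
    rw [← Finset.card_filter]
    apply Finset.card_bij' (fun a _ => s(a, b)) (fun e _ => tl e)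
    · intro a ha
      simp only [Finset.mem_filter, Finset.mem_univ, true_and] at ha
      rw [Finset.mem_filter]
      exact ⟨ha.1, Sym2.mem_mk_right _ _, ha.2⟩
    · intro e he
      rw [Finset.mem_filter] at he
      obtain ⟨he1, he2, he3⟩ := he
      obtain ⟨hes, hne⟩ := htl e he1
      have hee : e = s(tl e, b) := by rw [← he3]; exact hes
      simp only [Finset.mem_filter, Finset.mem_univ, true_and]
      rw [← hee]
      exact ⟨he1, he3⟩
    · intro a ha
      simp only [Finset.mem_filter, Finset.mem_univ, true_and] at ha
      obtain ⟨hes, hne⟩ := htl s(a, b) ha.1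
      -- s(a,b) = s(tl , h) with h = b, so tl = a
      rw [ha.2] at hes
      rw [Sym2.eq_iff] at hes
      have hab : a ≠ b := fun hc => hdiag _ ha.1 (by rw [Sym2.mk_isDiag_iff]; exact hc)
      rcases hes with ⟨h1, h2⟩ | ⟨h1, h2⟩
      · exact h1.symm
      · exact absurd h1 hab
    · intro e he
      rw [Finset.mem_filter] at he
      obtain ⟨he1, he2, he3⟩ := he
      obtain ⟨hes, hne⟩ := htl e he1
      rw [← he3]; exact hes.symm
  have hcolvirt : ∀ b : V,
      (∑ a : V, if ∃ ha : a ∈ A, ((π ⟨a, ha⟩ : {x // x ∈ B}) : V) = b then 1 else 0)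
      = if b ∈ B then 1 else 0 := by
    intro b
    by_cases hb : b ∈ B
    · rw [if_pos hb, ← Finset.card_filter]
      have : (univ.filter fun a => ∃ ha' : a ∈ A, ((π ⟨a, ha'⟩ : {x // x ∈ B}) : V) = b)
          = {((π.symm ⟨b, hb⟩ : {x // x ∈ A}) : V)} := by
        ext a
        simp only [Finset.mem_filter, Finset.mem_univ, true_and, Finset.mem_singleton]
        constructor
        · rintro ⟨ha', hab⟩
          have : π ⟨a, ha'⟩ = ⟨b, hb⟩ := Subtype.ext hab
          rw [← this, Equiv.symm_apply_apply]
        · intro hab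
          subst hab
          refine ⟨(π.symm ⟨b, hb⟩).2, ?_⟩
          rw [Subtype.coe_eta, Equiv.apply_symm_apply]
      rw [this, Finset.card_singleton]
    · rw [if_neg hb, ← Finset.card_filter]
      have : (univ.filter fun a => ∃ ha' : a ∈ A, ((π ⟨a, ha'⟩ : {x // x ∈ B}) : V) = b)
          = ∅ := by
        rw [Finset.filter_eq_empty_iff]
        rintro a _ ⟨ha', hab⟩
        exact hb (hab ▸ (π ⟨a, ha'⟩).2)
      rw [this, Finset.card_empty]
  have hcol : ∀ b : V, ∑ a : V, M a b = k + 1 := by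
    intro b
    rw [hM]
    simp only
    rw [Finset.sum_add_distrib, hcolfirst b, hcolvirt b]
    have h3 := houtin b
    by_cases hb : b ∈ B
    · have h1 : (E.filter fun e => b ∈ e ∧ h e ≠ b).card = k + 1 := by
        rw [hB] at hb
        exact (Finset.mem_filter.mp hb).2
      rw [if_pos hb]
      omega
    · have h2 := houtk b
      have h1 : (E.filter fun e => b ∈ e ∧ h e ≠ b).card = k := by
        rcases h2 with h2 | h2
        · exact h2
        · exfalso; apply hb; rw [hB, Finset.mem_filter]; exact ⟨mem_univ _, h2⟩
      rw [if_neg hb]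
      omega
  obtain ⟨σ, hσ⟩ := exists_birkhoff (k + 1) M hrow hcol
  -- assign each edge a class
  have hclass' : ∀ e : Sym2 V, ∃ i : Fin (k + 1), e ∈ E → σ i (tl e) = h e := by
    intro e
    by_cases he : e ∈ E
    · obtain ⟨hes, hne⟩ := htl e he
      have hM1 : M (tl e) (h e) ≠ 0 := by
        rw [hM]
        simp only
        have hcond : s(tl e, h e) ∈ E ∧ h s(tl e, h e) = h e := by
          rw [← hes]; exact ⟨he, rfl⟩
        rw [if_pos hcond]
        omega
      rw [hσ] at hM1
      obtain ⟨i, _, hi⟩ := Finset.exists_ne_zero_of_sum_ne_zero hM1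
      refine ⟨i, fun _ => ?_⟩
      by_contra hc
      rw [if_neg hc] at hi
      exact hi rfl
    · exact ⟨⟨0, Nat.succ_pos k⟩, fun hc => absurd hc he⟩
  choose c hc using hclass'
  -- the degree of v in class i
  have hD2 : ∀ (i : Fin (k + 1)) (v : V),
      (E.filter fun e => v ∈ e ∧ c e = i).card ≤ 2 := by
    intro i v
    have hsub : (E.filter fun e => v ∈ e ∧ c e = i)
        ⊆ ({s(v, σ i v), s((σ i).symm v, v)} : Finset (Sym2 V)) := by
      intro e he
      rw [Finset.mem_filter] at he
      obtain ⟨he1, hv, hci⟩ := he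
      obtain ⟨hes, hne⟩ := htl e he1
      have hce : σ i (tl e) = h e := hci ▸ hc e he1
      rw [hes, Sym2.mem_iff] at hv
      rw [Finset.mem_insert, Finset.mem_singleton]
      rcases hv with hv | hv
      · left
        rw [hes, ← hce, hv]
      · right
        have : (σ i).symm v = tl e := by
          rw [Equiv.symm_apply_eq, hv, hce]
        rw [hes, this, hv]
    calc (E.filter fun e => v ∈ e ∧ c e = i).card
        ≤ ({s(v, σ i v), s((σ i).symm v, v)} : Finset (Sym2 V)).card :=
          Finset.card_le_card hsub
      _ ≤ 2 := by
          apply le_trans (Finset.card_insert_le _ _)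
          simp
  have hDsum : ∀ v : V, ∑ i : Fin (k + 1), (E.filter fun e => v ∈ e ∧ c e = i).card
      = 2 * k + 1 := by
    intro v
    have h1 : (E.filter fun e => v ∈ e).card
        = ∑ i ∈ (univ : Finset (Fin (k + 1))),
          ((E.filter fun e => v ∈ e).filter fun e => c e = i).card :=
      Finset.card_eq_sum_card_fiberwise (fun e _ => mem_univ (c e))
    rw [hdeg v] at h1
    have h2 : ∀ i ∈ (univ : Finset (Fin (k + 1))),
        ((E.filter fun e => v ∈ e).filter fun e => c e = i).card
        = (E.filter fun e => v ∈ e ∧ c e = i).card := by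
      intro i _
      rw [Finset.filter_filter]
    rw [h1]
    exact (Finset.sum_congr rfl h2).symm
  have hDone : ∀ v : V, ∑ i : Fin (k + 1), (2 - (E.filter fun e => v ∈ e ∧ c e = i).card)
      = 1 := by
    intro v
    have h1 : ∑ i : Fin (k + 1),
        ((2 - (E.filter fun e => v ∈ e ∧ c e = i).card)
          + (E.filter fun e => v ∈ e ∧ c e = i).card) = 2 * (k + 1) := by
      rw [Finset.sum_congr rfl (fun i _ => Nat.sub_add_cancel (hD2 i v)), Finset.sum_const,
        Finset.card_univ, Fintype.card_fin, smul_eq_mul, Nat.mul_comm]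
    rw [Finset.sum_add_distrib, hDsum v] at h1
    omega
  -- total deficiency
  have hDefsum : ∑ i : Fin (k + 1),
      (∑ v : V, (2 - (E.filter fun e => v ∈ e ∧ c e = i).card)) = n := by
    rw [Finset.sum_comm]
    rw [Finset.sum_congr rfl (fun v _ => hDone v)]
    simp [hn]
  set Def : Fin (k + 1) → ℕ :=
    fun i => ∑ v : V, (2 - (E.filter fun e => v ∈ e ∧ c e = i).card) with hDef
  have hDefsum' : ∑ i : Fin (k + 1), Def i = n := hDefsum
  -- pick the two best classes
  obtain ⟨i0, _, hi0⟩ := Finset.exists_min_image (univ : Finset (Fin (k + 1))) Def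
    ⟨⟨0, Nat.succ_pos k⟩, mem_univ _⟩
  have herase : ((univ : Finset (Fin (k + 1))).erase i0).Nonempty := by
    rw [← Finset.card_pos, Finset.card_erase_of_mem (mem_univ _), Finset.card_univ,
      Fintype.card_fin]
    omega
  obtain ⟨j0, hj0mem, hj0⟩ := Finset.exists_min_image ((univ : Finset (Fin (k + 1))).erase i0)
    Def herase
  have hne0 : j0 ≠ i0 := (Finset.mem_erase.mp hj0mem).1
  have hne0' : i0 ≠ j0 := fun hx => hne0 hx.symm
  have hbound : k * (Def i0 + Def j0) ≤ 2 * n := by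
    have h1 : ∀ m ∈ (univ : Finset (Fin (k + 1))).erase i0,
        Def i0 + Def j0 ≤ 2 * Def m := by
      intro m hm
      have ha := hi0 m (mem_univ _)
      have hb := hj0 m hm
      omega
    have h2 : ((univ : Finset (Fin (k + 1))).erase i0).card = k := by
      rw [Finset.card_erase_of_mem (mem_univ _), Finset.card_univ, Fintype.card_fin]
      omega
    calc k * (Def i0 + Def j0)
        = ∑ _m ∈ (univ : Finset (Fin (k + 1))).erase i0, (Def i0 + Def j0) := by
          rw [Finset.sum_const, smul_eq_mul, h2]
      _ ≤ ∑ m ∈ (univ : Finset (Fin (k + 1))).erase i0, 2 * Def m := Finset.sum_le_sum h1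
      _ = 2 * ∑ m ∈ (univ : Finset (Fin (k + 1))).erase i0, Def m := by
          rw [Finset.mul_sum]
      _ ≤ 2 * ∑ m : Fin (k + 1), Def m := by
          apply Nat.mul_le_mul_left
          exact Finset.sum_le_sum_of_subset (Finset.erase_subset _ _)
      _ = 2 * n := by rw [hDefsum']
  have hpair : Def i0 + Def j0 ≤ n := by
    have h1 : ∑ m ∈ ({i0, j0} : Finset (Fin (k + 1))), Def m ≤ ∑ m : Fin (k + 1), Def m :=
      Finset.sum_le_sum_of_subset (Finset.subset_univ _)
    rw [Finset.sum_pair hne0'] at h1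
    rw [← hDefsum']
    exact h1
  have hpairv : ∀ v : V, (2 - (E.filter fun e => v ∈ e ∧ c e = i0).card)
      + (2 - (E.filter fun e => v ∈ e ∧ c e = j0).card) ≤ 1 := by
    intro v
    have h1 : ∑ m ∈ ({i0, j0} : Finset (Fin (k + 1))),
        (2 - (E.filter fun e => v ∈ e ∧ c e = m).card)
        ≤ ∑ m : Fin (k + 1), (2 - (E.filter fun e => v ∈ e ∧ c e = m).card) :=
      Finset.sum_le_sum_of_subset (Finset.subset_univ _)
    rw [Finset.sum_pair hne0', hDone v] at h1
    exact h1
  -- the subgraph F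
  have hdisjC : Disjoint (E.filter fun e => c e = i0) (E.filter fun e => c e = j0) := by
    rw [Finset.disjoint_left]
    intro e h1 h2
    rw [Finset.mem_filter] at h1 h2
    exact hne0' ((h1.2).symm.trans h2.2)
  have hcardF : ∀ v : V,
      ((((E.filter fun e => c e = i0) ∪ (E.filter fun e => c e = j0)).filter
        fun e => v ∈ e).card)
      = (E.filter fun e => v ∈ e ∧ c e = i0).card
        + (E.filter fun e => v ∈ e ∧ c e = j0).card := by
    intro v
    rw [Finset.filter_union,
      Finset.card_union_of_disjoint (Finset.disjoint_filter_filter hdisjC)]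
    congr 1 <;>
    · rw [Finset.filter_filter]
      apply congrArg Finset.card
      apply Finset.filter_congr
      intro e _
      exact and_comm
  refine ⟨(E.filter fun e => c e = i0) ∪ (E.filter fun e => c e = j0), ?_, ?_, ?_⟩
  · intro e he
    rw [Finset.coe_union, Set.mem_union] at he
    rcases he with he | he <;>
      exact SimpleGraph.mem_edgeFinset.mp (Finset.mem_of_mem_filter _ (by exact_mod_cast he))
  · intro v
    rw [hcardF v]
    have h1 := hpairv v
    have h2 := hD2 i0 v
    have h3 := hD2 j0 v
    omega
  · have hcount : (univ.filter fun v : V =>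
        ((((E.filter fun e => c e = i0) ∪ (E.filter fun e => c e = j0)).filter
          fun e => v ∈ e).card) = 3).card = Def i0 + Def j0 := by
      have h1 : (univ.filter fun v : V =>
          (E.filter fun e => v ∈ e ∧ c e = i0).card
            + (E.filter fun e => v ∈ e ∧ c e = j0).card = 3).card
          = Def i0 + Def j0 := by
        rw [Finset.card_filter, hDef]
        simp only
        rw [← Finset.sum_add_distrib]
        apply Finset.sum_congr rfl
        intro v _
        have ha := hpairv v
        have hb := hD2 i0 v
        have hc' := hD2 j0 v
        split_ifs with hsplit
        · omega
        · omega
      rw [← h1]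
      apply congrArg
      apply Finset.filter_congr
      intro v _
      rw [hcardF v]
    rw [hcount]
    have h7 : Def i0 + Def j0 ≤ n := hpair
    -- (2k+2) * t ≤ 8n given k * t ≤ 2n and t ≤ n
    have h8 : (2 * k + 2) * (Def i0 + Def j0)
        = 2 * (k * (Def i0 + Def j0)) + 2 * (Def i0 + Def j0) := by ring
    omega

end Helpers2

namespace TF

noncomputable section

variable {V : Type*} {W : Type*}

theorem stmt15 [Fintype V] (G : SimpleGraph V) (k d : ℕ) (hk : 2 ≤ k)
    (hd : d = 2 * k + 1) (hreg : G.IsRegularOfDegree d) :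
    ∃ F : Set (Sym2 V), F ⊆ G.edgeSet ∧
      (∀ v : V, {e ∈ F | v ∈ e}.ncard = 3 ∨ {e ∈ F | v ∈ e}.ncard = 4) ∧
      ({v : V | {e ∈ F | v ∈ e}.ncard = 3}.ncard : ℚ) ≤
        8 * (Fintype.card V : ℚ) / ((d : ℚ) + 1) := by
  classical
  subst hd
  obtain ⟨F, hFsub, hdeg34, hcount⟩ := main_assembly G k hk hreg
  have hset : ∀ v : V, {e ∈ (↑F : Set (Sym2 V)) | v ∈ e}
      = ↑(F.filter fun e => v ∈ e) := by
    intro v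
    ext e
    simp [Finset.mem_filter]
  have hncard : ∀ v : V, {e ∈ (↑F : Set (Sym2 V)) | v ∈ e}.ncard
      = (F.filter fun e => v ∈ e).card := by
    intro v
    rw [hset v, Set.ncard_coe_finset]
  refine ⟨↑F, hFsub, fun v => ?_, ?_⟩
  · rw [hncard v]
    exact hdeg34 v
  · have hsetv : {v : V | {e ∈ (↑F : Set (Sym2 V)) | v ∈ e}.ncard = 3}
        = ↑(Finset.univ.filter fun v : V => (F.filter fun e => v ∈ e).card = 3) := by
      ext v
      simp only [Set.mem_setOf_eq, Finset.coe_filter, Finset.mem_univ, true_and]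
      rw [hncard v]
    rw [hsetv, Set.ncard_coe_finset]
    have hineq : ((Finset.univ.filter fun v : V =>
        (F.filter fun e => v ∈ e).card = 3).card) * (2 * k + 2)
        ≤ 8 * Fintype.card V := by
      rw [Nat.mul_comm]
      exact hcount
    have hpos : (0 : ℚ) < ((2 * k + 1 : ℕ) : ℚ) + 1 := by positivity
    rw [le_div_iff₀ hpos]
    have hq : (((Finset.univ.filter fun v : V =>
        (F.filter fun e => v ∈ e).card = 3).card * (2 * k + 2) : ℕ) : ℚ)
        ≤ ((8 * Fintype.card V : ℕ) : ℚ) := Nat.cast_le.mpr hineq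
    push_cast at hq ⊢
    linarith

end

end TF
end
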